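/- arXiv:2511.17051 — 2 statements merged into one kernel-verified Lean document; each statement's English description precedes it below -/
import Mathlib

section
/- Let C be a closed convex cone in a finite-dimensional real vector space and let L be a linear subspace of that space. A subset F of C ∩ L is a face of the closed convex cone C ∩ L if and only if there exists a face F' of C with F = F' ∩ L; moreover, in that case the smallest face of C containing F (the intersection of all faces of C containing F) is such a face F', i.e. F equals the intersection of L with the smallest face of C containing F. -/
/-- A face of a convex cone `C`: a nonempty convex subset `F ⊆ C` such that whenever the open
segment between two points of `C` meets `F`, both endpoints lie in `F`. -/
def IsFaceOf {E : Type*} [AddCommGroup E] [Module ℝ E] (F C : Set E) : Prop :=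
  F.Nonempty ∧ F ⊆ C ∧ Convex ℝ F ∧
    ∀ x ∈ C, ∀ y ∈ C, (∃ t : ℝ, 0 < t ∧ t < 1 ∧ t • x + (1 - t) • y ∈ F) → x ∈ F ∧ y ∈ F

theorem faces_key {E : Type*} [NormedAddCommGroup E] [NormedSpace ℝ E]
    [FiniteDimensional ℝ E]
    (C : Set E) (hCconv : Convex ℝ C)
    (hCcone : ∀ c : ℝ, 0 ≤ c → ∀ x ∈ C, c • x ∈ C)
    (L : Submodule ℝ E) (F : Set E)
    (hface : IsFaceOf F (C ∩ (L : Set E))) :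
    IsFaceOf (⋂₀ {F' : Set E | IsFaceOf F' C ∧ F ⊆ F'}) C ∧
      F = (⋂₀ {F' : Set E | IsFaceOf F' C ∧ F ⊆ F'}) ∩ (L : Set E) := by
  obtain ⟨hFne, hFsub, hFconv, hFface⟩ := hface
  have hFC : F ⊆ C := fun x hx => (hFsub hx).1
  have hFL : F ⊆ (L : Set E) := fun x hx => (hFsub hx).2
  obtain ⟨x₀, hx₀⟩ := hFne
  have h0C : (0 : E) ∈ C := by
    have := hCcone 0 le_rfl x₀ (hFC hx₀); simpa using this
  have hadd : ∀ x ∈ C, ∀ y ∈ C, x + y ∈ C := by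
    intro x hx y hy
    have h := hCconv hx hy (by norm_num : (0:ℝ) ≤ 1/2) (by norm_num : (0:ℝ) ≤ 1/2) (by norm_num)
    have h2 := hCcone 2 (by norm_num) _ h
    have : (2:ℝ) • ((1/2:ℝ) • x + (1/2:ℝ) • y) = x + y := by
      rw [smul_add, smul_smul, smul_smul]; norm_num
    rwa [this] at h2
  -- nonnegative combinations lie in C
  have hsum : ∀ (s : Finset E) (w : E → ℝ), (∀ i ∈ s, 0 ≤ w i) → (∀ i ∈ s, i ∈ C) →
      (∑ i ∈ s, w i • i) ∈ C := by
    classical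
    intro s
    induction s using Finset.induction_on with
    | empty => intro w _ _; simpa using h0C
    | insert _ _ hi ih =>
      rename_i a s'
      intro w hw hmem
      rw [Finset.sum_insert hi]
      exact hadd _ (hCcone _ (hw a (Finset.mem_insert_self a s')) _
          (hmem a (Finset.mem_insert_self a s')))
        _ (ih w (fun i h => hw i (Finset.mem_insert_of_mem h))
          (fun i h => hmem i (Finset.mem_insert_of_mem h)))
  set 𝒮 : Set (Set E) := {F' : Set E | IsFaceOf F' C ∧ F ⊆ F'} with h𝒮
  have hCmem : C ∈ 𝒮 := ⟨⟨⟨0, h0C⟩, le_rfl, hCconv, fun x hx y hy _ => ⟨hx, hy⟩⟩, hFC⟩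
  set G : Set E := ⋂₀ 𝒮 with hG
  have hFG : F ⊆ G := fun f hf => Set.mem_sInter.2 fun F' hF' => hF'.2 hf
  have hGC : G ⊆ C := fun x hx => Set.mem_sInter.1 hx C hCmem
  have hGface : IsFaceOf G C := by
    refine ⟨⟨x₀, hFG hx₀⟩, hGC, ?_, ?_⟩
    · exact convex_sInter fun F' hF' => hF'.1.2.2.1
    · rintro x hx y hy ⟨t, ht0, ht1, htG⟩
      constructor <;> intro F' hF'
      · exact (hF'.1.2.2.2 x hx y hy ⟨t, ht0, ht1, Set.mem_sInter.1 htG F' hF'⟩).1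
      · exact (hF'.1.2.2.2 x hx y hy ⟨t, ht0, ht1, Set.mem_sInter.1 htG F' hF'⟩).2
  -- Choose a "relative interior-like" point z of F
  have hz : ∃ z ∈ F, ∀ f ∈ F, ∃ ε : ℝ, 0 < ε ∧ z + ε • (z - f) ∈ C := by
    obtain ⟨b, hbF, hbspan, hbind⟩ := exists_linearIndependent ℝ F
    have hbfin : b.Finite := hbind.setFinite
    set s : Finset E := hbfin.toFinset with hs
    have hsb : (s : Set E) = b := hbfin.coe_toFinset
    by_cases hs0 : s = ∅
    · -- F = {0}
      have hb0 : b = ∅ := by rw [← hsb, hs0]; simp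
      have hFspan : F ⊆ (Submodule.span ℝ F : Set E) := Submodule.subset_span
      have : Submodule.span ℝ F = ⊥ := by
        rw [← hbspan, hb0]; simp
      have hF0 : ∀ f ∈ F, f = 0 := by
        intro f hf
        have h := hFspan hf
        rw [this] at h
        simpa using h
      refine ⟨x₀, hx₀, fun f hf => ⟨1, one_pos, ?_⟩⟩
      rw [hF0 x₀ hx₀, hF0 f hf]; simpa using h0C
    · have hcard : 0 < s.card := Finset.card_pos.2 (Finset.nonempty_iff_ne_empty.2 hs0)
      set m : ℝ := (s.card : ℝ) with hm
      have hm0 : 0 < m := by rw [hm]; exact_mod_cast hcard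
      set z : E := ∑ i ∈ s, (m⁻¹ : ℝ) • i with hzdef
      have hsF : ∀ i ∈ s, i ∈ F := by
        intro i hi
        exact hbF (hsb ▸ hi)
      have hzF : z ∈ F := by
        apply hFconv.sum_mem (fun i _ => by positivity)
        · rw [Finset.sum_const, nsmul_eq_mul]
          field_simp
          exact hm.symm
        · exact hsF
      refine ⟨z, hzF, fun f hf => ?_⟩
      -- write f as a combination of elements of s
      have hfspan : f ∈ Submodule.span ℝ (s : Set E) := by
        rw [hsb, hbspan]; exact Submodule.subset_span hf
      obtain ⟨c, -, hc⟩ := Submodule.mem_span_finset.1 hfspan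
      set B : ℝ := 1 + ∑ i ∈ s, |c i| with hB
      have hB0 : 0 < B := by
        have : (0:ℝ) ≤ ∑ i ∈ s, |c i| := Finset.sum_nonneg fun i _ => abs_nonneg _
        linarith
      have hci : ∀ i ∈ s, c i ≤ B := by
        intro i hi
        have h1 : |c i| ≤ ∑ j ∈ s, |c j| :=
          Finset.single_le_sum (fun j _ => abs_nonneg (c j)) hi
        have := le_abs_self (c i)
        linarith
      set ε : ℝ := 1 / (m * B) with hε
      have hε0 : 0 < ε := by positivity
      refine ⟨ε, hε0, ?_⟩
      have key : z + ε • (z - f) = ∑ i ∈ s, ((1 + ε) * m⁻¹ - ε * c i) • i := by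
        have h1 : z + ε • (z - f) = (1 + ε) • z - ε • f := by module
        rw [h1, ← hc, hzdef, Finset.smul_sum, Finset.smul_sum, ← Finset.sum_sub_distrib]
        refine Finset.sum_congr rfl fun i _ => ?_
        rw [smul_smul, smul_smul, ← sub_smul]
      rw [key]
      apply hsum
      · intro i hi
        have h1 : ε * c i ≤ ε * B := by
          apply mul_le_mul_of_nonneg_left (hci i hi) hε0.le
        have h2 : ε * B = m⁻¹ := by
          rw [hε]; field_simp
        have h3 : m⁻¹ ≤ (1 + ε) * m⁻¹ := by
          have : (1:ℝ) ≤ 1 + ε := by linarith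
          nlinarith [inv_pos.2 hm0]
        nlinarith [h1, h2, h3]
      · exact fun i hi => hFC (hsF i hi)
  obtain ⟨z, hzF, hz⟩ := hz
  have hzC : z ∈ C := hFC hzF
  -- the face generated by z
  set Fz : Set E := {y | y ∈ C ∧ ∃ ε : ℝ, 0 < ε ∧ z + ε • (z - y) ∈ C} with hFz
  have hmono : ∀ y : E, ∀ ε ε' : ℝ, 0 < ε' → ε' ≤ ε → z + ε • (z - y) ∈ C →
      z + ε' • (z - y) ∈ C := by
    intro y ε ε' hε' hle hmem
    have hε : 0 < ε := lt_of_lt_of_le hε' hle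
    have hcomb := hCconv hzC hmem (a := 1 - ε'/ε) (b := ε'/ε)
      (by rw [sub_nonneg]; exact div_le_one_of_le₀ (by linarith) hε.le)
      (by positivity) (by ring)
    have heq : (1 - ε'/ε) • z + (ε'/ε) • (z + ε • (z - y)) = z + ε' • (z - y) := by
      have hεne : ε ≠ 0 := hε.ne'
      match_scalars <;> field_simp <;> ring
    rwa [heq] at hcomb
  have hFzface : IsFaceOf Fz C := by
    refine ⟨⟨z, hzC, 1, one_pos, by simpa using hzC⟩, fun y hy => hy.1, ?_, ?_⟩
    · rintro y₁ ⟨hy₁C, ε₁, hε₁, h₁⟩ y₂ ⟨hy₂C, ε₂, hε₂, h₂⟩ a b ha hb hab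
      refine ⟨hCconv hy₁C hy₂C ha hb hab, min ε₁ ε₂, lt_min hε₁ hε₂, ?_⟩
      have m₁ := hmono y₁ ε₁ (min ε₁ ε₂) (lt_min hε₁ hε₂) (min_le_left _ _) h₁
      have m₂ := hmono y₂ ε₂ (min ε₁ ε₂) (lt_min hε₁ hε₂) (min_le_right _ _) h₂
      have hcomb := hCconv m₁ m₂ ha hb hab
      have hb' : b = 1 - a := by linarith
      subst hb'
      have heq : a • (z + min ε₁ ε₂ • (z - y₁)) + (1 - a) • (z + min ε₁ ε₂ • (z - y₂)) =
          z + min ε₁ ε₂ • (z - (a • y₁ + (1 - a) • y₂)) := by module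
      rwa [heq] at hcomb
    · have aux : ∀ x ∈ C, ∀ y ∈ C, ∀ t : ℝ, 0 < t → t < 1 →
          (t • x + (1 - t) • y) ∈ Fz → x ∈ Fz := by
        rintro x hx y hy t ht0 ht1 ⟨-, ε, hε0, hq⟩
        set q : E := z + ε • (z - (t • x + (1 - t) • y)) with hqdef
        set a : ℝ := 1 / (2 * (1 + ε)) with ha
        set b : ℝ := ε * (1 - t) / (2 * (1 + ε)) with hb
        set δ : ℝ := t * ε / (2 * (1 + ε)) with hδ
        have hε1 : (0:ℝ) < 1 + ε := by linarith
        have ha0 : 0 < a := by positivity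
        have hb0 : 0 ≤ b := by
          apply div_nonneg _ (by positivity)
          nlinarith
        have hδ0 : 0 < δ := by positivity
        have hc0 : 0 ≤ 1 - a - b := by
          have h2 : a + b = (1 + ε * (1 - t)) / (2 * (1 + ε)) := by rw [ha, hb]; ring
          have h3 : (1 + ε * (1 - t)) / (2 * (1 + ε)) ≤ 1 := by
            rw [div_le_one (by positivity)]; nlinarith
          linarith
        have heq : z + δ • (z - x) = a • q + b • y + (1 - a - b) • z := by
          rw [hqdef, ha, hb, hδ]
          match_scalars <;> field_simp <;> ring
        refine ⟨hx, δ, hδ0, ?_⟩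
        rw [heq]
        exact hadd _ (hadd _ (hCcone a ha0.le q hq) _ (hCcone b hb0 y hy)) _
          (hCcone _ hc0 z hzC)
      rintro x hx y hy ⟨t, ht0, ht1, htF⟩
      refine ⟨aux x hx y hy t ht0 ht1 htF, aux y hy x hx (1 - t) (by linarith) (by linarith) ?_⟩
      have : (1 - t) • y + (1 - (1 - t)) • x = t • x + (1 - t) • y := by module
      rwa [this]
  have hFFz : F ⊆ Fz := by
    intro f hf
    obtain ⟨ε, hε0, hε⟩ := hz f hf
    exact ⟨hFC hf, ε, hε0, hε⟩
  have hFzmem : Fz ∈ 𝒮 := ⟨hFzface, hFFz⟩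
  refine ⟨hGface, Set.Subset.antisymm (fun f hf => ⟨hFG hf, hFL hf⟩) ?_⟩
  rintro y ⟨hyG, hyL⟩
  obtain ⟨hyC, ε, hε0, hεC⟩ : y ∈ Fz := Set.mem_sInter.1 hyG Fz hFzmem
  have hxL : z + ε • (z - y) ∈ (L : Set E) := by
    exact L.add_mem (hFL hzF) (L.smul_mem _ (L.sub_mem (hFL hzF) hyL))
  have ht0 : (0:ℝ) < 1 / (1 + ε) := by positivity
  have ht1 : 1 / (1 + ε) < 1 := by
    rw [div_lt_one (by linarith)]; linarith
  have heq : (1 / (1 + ε)) • (z + ε • (z - y)) + (1 - 1 / (1 + ε)) • y = z := by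
    have : (1:ℝ) + ε ≠ 0 := by positivity
    match_scalars <;> field_simp <;> ring
  refine (hFface _ ⟨hεC, hxL⟩ y ⟨hyC, hyL⟩ ⟨1 / (1 + ε), ht0, ht1, ?_⟩).2
  rw [heq]; exact hzF

/-- **Faces of linear slices of closed convex cones.**
Let `C` be a closed convex cone in a finite-dimensional real vector space and `L` a linear
subspace.  A subset `F` of `C ∩ L` is a face of `C ∩ L` if and only if it is the intersection
of `L` with a face `F'` of `C`; moreover, in that case the smallest face of `C` containing `F`
(the intersection of all faces of `C` containing `F`) is itself a face of `C`, and
`F` equals the intersection of `L` with it. -/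
theorem faces_of_slices {E : Type*} [NormedAddCommGroup E] [NormedSpace ℝ E]
    [FiniteDimensional ℝ E]
    (C : Set E) (hCcl : IsClosed C) (hCconv : Convex ℝ C)
    (hCcone : ∀ c : ℝ, 0 ≤ c → ∀ x ∈ C, c • x ∈ C)
    (L : Submodule ℝ E) (F : Set E) (hF : F ⊆ C ∩ (L : Set E)) :
    (IsFaceOf F (C ∩ (L : Set E)) ↔ ∃ F', IsFaceOf F' C ∧ F = F' ∩ (L : Set E)) ∧
    (IsFaceOf F (C ∩ (L : Set E)) →
      IsFaceOf (⋂₀ {F' : Set E | IsFaceOf F' C ∧ F ⊆ F'}) C ∧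
      F = (⋂₀ {F' : Set E | IsFaceOf F' C ∧ F ⊆ F'}) ∩ (L : Set E)) := by
  refine ⟨⟨fun h => ?_, ?_⟩, fun h => faces_key C hCconv hCcone L F h⟩
  · obtain ⟨h1, h2⟩ := faces_key C hCconv hCcone L F h
    exact ⟨_, h1, h2⟩
  · rintro ⟨F', ⟨⟨w, hw⟩, hF'C, hF'conv, hF'face⟩, rfl⟩
    have h0F' : (0 : E) ∈ F' := by
      have hwC : w ∈ C := hF'C hw
      have h0C : (0 : E) ∈ C := by simpa using hCcone 0 le_rfl w hwC
      have h2w : (2:ℝ) • w ∈ C := hCcone 2 (by norm_num) w hwC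
      have hhalf : (1/2 : ℝ) • ((2:ℝ) • w) + (1 - 1/2 : ℝ) • (0:E) ∈ F' := by
        have : (1/2 : ℝ) • ((2:ℝ) • w) + (1 - 1/2 : ℝ) • (0:E) = w := by
          rw [smul_smul]; norm_num
        rw [this]; exact hw
      exact (hF'face _ h2w 0 h0C ⟨1/2, by norm_num, by norm_num, hhalf⟩).2
    refine ⟨⟨0, h0F', L.zero_mem⟩, fun y hy => ⟨hF'C hy.1, hy.2⟩,
      hF'conv.inter L.convex, ?_⟩
    rintro x ⟨hxC, hxL⟩ y ⟨hyC, hyL⟩ ⟨t, ht0, ht1, htF', htL⟩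
    obtain ⟨hx', hy'⟩ := hF'face x hxC y hyC ⟨t, ht0, ht1, htF'⟩
    exact ⟨⟨hx', hxL⟩, ⟨hy', hyL⟩⟩
end

section
/- The following are equivalent: (a) the subspaces satisfy the three Ishi axioms [V1] A·B ∈ V_ik for all A ∈ V_ij, B ∈ V_jk (1 ≤ i ≤ j ≤ k ≤ r), [V2] Aᵀ·B ∈ V_jk for all A ∈ V_ij, B ∈ V_ik (1 ≤ i ≤ j < k ≤ r), and [V3] Aᵀ·A ∈ ℝ·I_{n_j} for all A ∈ V_ij (1 ≤ i ≤ j ≤ r); (b) for every T ∈ 𝕋_++ the map 𝒯_T : X ↦ Tᵀ·X·T maps V into V and restricts to a bijection of K = S^n_++ ∩ V onto itself, the set {𝒯_T restricted to V : T ∈ 𝕋_++} is a group under composition of linear automorphisms of V, and this group acts simply transitively on K, i.e. for all X, Y ∈ K there is exactly one T ∈ 𝕋_++ with Tᵀ·X·T = Y. -/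
noncomputable section
open scoped Classical
open Matrix

/-- An extreme ray of `C`: a face whose linear span is one-dimensional. -/
def IsExtremeRayOf {E : Type*} [AddCommGroup E] [Module ℝ E] (R C : Set E) : Prop :=
  IsFaceOf R C ∧ Module.finrank ℝ (Submodule.span ℝ R) = 1

/-- `x` is a sum of at most `m` points, each lying on an extreme ray of `C`. -/
def SumExtreme {E : Type*} [AddCommGroup E] [Module ℝ E] (C : Set E) (m : ℕ) (x : E) : Prop :=
  ∃ (k : ℕ) (f : Fin k → E), k ≤ m ∧ (∀ i, ∃ R, IsExtremeRayOf R C ∧ f i ∈ R) ∧ x = ∑ i, f i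

/-- The Carathéodory number of the cone `C`. -/
def caraNumber {E : Type*} [AddCommGroup E] [Module ℝ E] (C : Set E) : ℕ :=
  sInf {m | ∀ x ∈ C, SumExtreme C m x}

/-- The ray generated by a point. -/
def ray {E : Type*} [AddCommGroup E] [Module ℝ E] (A : E) : Set E :=
  {X | ∃ c : ℝ, 0 ≤ c ∧ X = c • A}

/-- The trace (Frobenius) inner product on spaces of rectangular real matrices. -/
def trInner {a b : Type*} [Fintype a] [Fintype b] (X Y : Matrix a b ℝ) : ℝ :=
  Matrix.trace (Xᵀ * Y)

/-- `y` is the orthogonal projection of `x` onto the subspace `W` (with respect to the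
trace inner product). -/
def IsProjOn {a b : Type*} [Fintype a] [Fintype b] (W : Set (Matrix a b ℝ))
    (x y : Matrix a b ℝ) : Prop :=
  y ∈ W ∧ ∀ w ∈ W, trInner (x - y) w = 0

/-- The image of the set `S` under orthogonal projection onto the subspace `W`. -/
def projSet {a b : Type*} [Fintype a] [Fintype b] (W S : Set (Matrix a b ℝ)) :
    Set (Matrix a b ℝ) :=
  {y | ∃ x ∈ S, IsProjOn W x y}

/-- The cone of positive semidefinite matrices. -/
def PSD (ι : Type*) [Fintype ι] : Set (Matrix ι ι ℝ) := {X | X.PosSemidef}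

variable {r : ℕ}

/-- Index type for an `n₁ + ⋯ + n_r` block partition. -/
abbrev BIx (n : Fin r → ℕ) : Type := Σ i : Fin r, Fin (n i)

/-- The `(i,j)` block of a block matrix. -/
def blk {n : Fin r → ℕ} (X : Matrix (BIx n) (BIx n) ℝ) (i j : Fin r) :
    Matrix (Fin (n i)) (Fin (n j)) ℝ :=
  Matrix.of fun a b => X ⟨i, a⟩ ⟨j, b⟩

/-- The space `V` of symmetric block matrices whose blocks lie in the subspaces `Vb i j`
(for `i ≤ j`; the diagonal subspaces `Vb i i` are required elsewhere to be `ℝ·I`). -/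
def Vset (n : Fin r → ℕ)
    (Vb : ∀ i j : Fin r, Submodule ℝ (Matrix (Fin (n i)) (Fin (n j)) ℝ)) :
    Set (Matrix (BIx n) (BIx n) ℝ) :=
  {X | X.IsSymm ∧ ∀ i j : Fin r, i ≤ j → blk X i j ∈ Vb i j}

/-- The set `𝕋` of upper block-triangular matrices with diagonal blocks in `ℝ·I` and
off-diagonal blocks in the `Vb i j`. -/
def TT (n : Fin r → ℕ)
    (Vb : ∀ i j : Fin r, Submodule ℝ (Matrix (Fin (n i)) (Fin (n j)) ℝ)) :
    Set (Matrix (BIx n) (BIx n) ℝ) :=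
  {T | (∀ i j : Fin r, j < i → blk T i j = 0) ∧
    (∀ i : Fin r, ∃ c : ℝ, blk T i i = c • (1 : Matrix (Fin (n i)) (Fin (n i)) ℝ)) ∧
    (∀ i j : Fin r, i < j → blk T i j ∈ Vb i j)}

/-- The set `𝕋₊₊ ⊆ 𝕋` of matrices with positive diagonal entries. -/
def TTpp (n : Fin r → ℕ)
    (Vb : ∀ i j : Fin r, Submodule ℝ (Matrix (Fin (n i)) (Fin (n j)) ℝ)) :
    Set (Matrix (BIx n) (BIx n) ℝ) :=
  {T | (∀ i j : Fin r, j < i → blk T i j = 0) ∧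
    (∀ i : Fin r, ∃ c : ℝ, 0 < c ∧ blk T i i = c • (1 : Matrix (Fin (n i)) (Fin (n i)) ℝ)) ∧
    (∀ i j : Fin r, i < j → blk T i j ∈ Vb i j)}

/-- The Ishi spectrahedral cone `K = S^n_{++} ∩ V`. -/
def Kcone (n : Fin r → ℕ)
    (Vb : ∀ i j : Fin r, Submodule ℝ (Matrix (Fin (n i)) (Fin (n j)) ℝ)) :
    Set (Matrix (BIx n) (BIx n) ℝ) :=
  {X | X.PosDef ∧ X ∈ Vset n Vb}

/-- The closure `S^n_+ ∩ V` of the Ishi spectrahedral cone. -/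
def KclSet (n : Fin r → ℕ)
    (Vb : ∀ i j : Fin r, Submodule ℝ (Matrix (Fin (n i)) (Fin (n j)) ℝ)) :
    Set (Matrix (BIx n) (BIx n) ℝ) :=
  {X | X.PosSemidef ∧ X ∈ Vset n Vb}

/-- The dual cone `D = proj_V (S^n_+)` of `K` in `V`. -/
def dualD (n : Fin r → ℕ)
    (Vb : ∀ i j : Fin r, Submodule ℝ (Matrix (Fin (n i)) (Fin (n j)) ℝ)) :
    Set (Matrix (BIx n) (BIx n) ℝ) :=
  projSet (Vset n Vb) (PSD (BIx n))

/-- The subspace `V^B` of matrices of `V` supported on blocks indexed by `B × B`. -/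
def VBset (n : Fin r → ℕ)
    (Vb : ∀ i j : Fin r, Submodule ℝ (Matrix (Fin (n i)) (Fin (n j)) ℝ))
    (B : Finset (Fin r)) : Set (Matrix (BIx n) (BIx n) ℝ) :=
  {X | X ∈ Vset n Vb ∧ ∀ i j : Fin r, i ≤ j → (i ∉ B ∨ j ∉ B) → blk X i j = 0}

/-- The matrix `I^B` whose diagonal blocks indexed by `B` are identity blocks and whose
other blocks vanish. -/
def IB (n : Fin r → ℕ) (B : Finset (Fin r)) : Matrix (BIx n) (BIx n) ℝ :=
  Matrix.of fun a b => if a = b ∧ a.1 ∈ B then 1 else 0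

/-- The face `F_{T,B} = Tᵀ·(S^n_+ ∩ V^B)·T` of the closure `S^n_+ ∩ V`. -/
def FTB (n : Fin r → ℕ)
    (Vb : ∀ i j : Fin r, Submodule ℝ (Matrix (Fin (n i)) (Fin (n j)) ℝ))
    (T : Matrix (BIx n) (BIx n) ℝ) (B : Finset (Fin r)) :
    Set (Matrix (BIx n) (BIx n) ℝ) :=
  {Y | ∃ X, Matrix.PosSemidef X ∧ X ∈ VBset n Vb B ∧ Y = Tᵀ * X * T}

/-- The face `F^*_{T,N} = proj_V (T · proj_{V^N}(S^n_+) · Tᵀ)` of the dual cone. -/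
def FstarTN (n : Fin r → ℕ)
    (Vb : ∀ i j : Fin r, Submodule ℝ (Matrix (Fin (n i)) (Fin (n j)) ℝ))
    (T : Matrix (BIx n) (BIx n) ℝ) (N : Finset (Fin r)) :
    Set (Matrix (BIx n) (BIx n) ℝ) :=
  {Z | ∃ Y ∈ projSet (VBset n Vb N) (PSD (BIx n)), IsProjOn (Vset n Vb) (T * Y * Tᵀ) Z}


/-! ### Auxiliary block-matrix API -/

section Aux

variable {n : Fin r → ℕ}

lemma blk_apply (X : Matrix (BIx n) (BIx n) ℝ) (i j : Fin r) (a : Fin (n i)) (b : Fin (n j)) :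
    blk X i j a b = X ⟨i, a⟩ ⟨j, b⟩ := rfl

lemma blk_ext {X Y : Matrix (BIx n) (BIx n) ℝ} (h : ∀ i j, blk X i j = blk Y i j) : X = Y := by
  ext ⟨i, a⟩ ⟨j, b⟩
  exact congrFun (congrFun (h i j) a) b

lemma blk_add (X Y : Matrix (BIx n) (BIx n) ℝ) (i j : Fin r) :
    blk (X + Y) i j = blk X i j + blk Y i j := rfl

lemma blk_sub (X Y : Matrix (BIx n) (BIx n) ℝ) (i j : Fin r) :
    blk (X - Y) i j = blk X i j - blk Y i j := rfl

lemma blk_neg (X : Matrix (BIx n) (BIx n) ℝ) (i j : Fin r) :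
    blk (-X) i j = - blk X i j := rfl

lemma blk_smul (c : ℝ) (X : Matrix (BIx n) (BIx n) ℝ) (i j : Fin r) :
    blk (c • X) i j = c • blk X i j := rfl

lemma blk_zero (i j : Fin r) : blk (0 : Matrix (BIx n) (BIx n) ℝ) i j = 0 := rfl

lemma blk_transpose (X : Matrix (BIx n) (BIx n) ℝ) (i j : Fin r) :
    blk Xᵀ i j = (blk X j i)ᵀ := rfl

lemma blk_sum {α : Type*} (s : Finset α) (f : α → Matrix (BIx n) (BIx n) ℝ) (i j : Fin r) :
    blk (∑ x ∈ s, f x) i j = ∑ x ∈ s, blk (f x) i j := by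
  ext a b
  simp [blk_apply, Matrix.sum_apply]

lemma blk_one_diag (i : Fin r) :
    blk (1 : Matrix (BIx n) (BIx n) ℝ) i i = 1 := by
  ext a b
  by_cases h : a = b <;> simp [blk_apply, Matrix.one_apply, h]

lemma blk_one_offdiag {i j : Fin r} (h : i ≠ j) :
    blk (1 : Matrix (BIx n) (BIx n) ℝ) i j = 0 := by
  ext a b
  have : (⟨i, a⟩ : BIx n) ≠ ⟨j, b⟩ := by
    intro hh
    exact h (congrArg Sigma.fst hh)
  simp [blk_apply, Matrix.one_apply, this]

lemma blk_mul (X Y : Matrix (BIx n) (BIx n) ℝ) (i j : Fin r) :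
    blk (X * Y) i j = ∑ k : Fin r, blk X i k * blk Y k j := by
  ext a b
  rw [Matrix.sum_apply]
  simp only [blk_apply, Matrix.mul_apply]
  rw [← Finset.univ_sigma_univ, Finset.sum_sigma]

lemma isSymm_blk {X : Matrix (BIx n) (BIx n) ℝ} (hX : X.IsSymm) (i j : Fin r) :
    blk X j i = (blk X i j)ᵀ := by
  ext a b
  simp only [blk_apply, Matrix.transpose_apply]
  have := congrFun (congrFun (hX : Xᵀ = X) ⟨j, a⟩) ⟨i, b⟩
  simpa using this.symm

end Aux
section Aux2

variable {n : Fin r → ℕ}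
variable {Vb : ∀ i j : Fin r, Submodule ℝ (Matrix (Fin (n i)) (Fin (n j)) ℝ)}

/-- Embedding of a single rectangular block into a full block matrix. -/
def emb (n : Fin r → ℕ) (i j : Fin r) (A : Matrix (Fin (n i)) (Fin (n j)) ℝ) :
    Matrix (BIx n) (BIx n) ℝ :=
  Matrix.of fun p q =>
    if h : p.1 = i ∧ q.1 = j then
      A (Fin.cast (congrArg n h.1) p.2) (Fin.cast (congrArg n h.2) q.2) else 0

lemma blk_emb_same (i j : Fin r) (A : Matrix (Fin (n i)) (Fin (n j)) ℝ) :
    blk (emb n i j A) i j = A := by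
  ext a b
  simp [blk_apply, emb]

lemma blk_emb_ne (i j k l : Fin r) (A : Matrix (Fin (n i)) (Fin (n j)) ℝ)
    (h : ¬(k = i ∧ l = j)) : blk (emb n i j A) k l = 0 := by
  ext a b
  simp only [blk_apply, emb, Matrix.of_apply]
  rw [dif_neg]
  · rfl
  · exact h

lemma emb_transpose (i j : Fin r) (A : Matrix (Fin (n i)) (Fin (n j)) ℝ) :
    (emb n i j A)ᵀ = emb n j i Aᵀ := by
  ext ⟨k, a⟩ ⟨l, b⟩
  simp only [Matrix.transpose_apply, emb, Matrix.of_apply]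
  by_cases h1 : l = i <;> by_cases h2 : k = j
  · subst h1; subst h2; simp
  · subst h1; simp [h2]
  · subst h2; simp [h1]
  · simp [h1, h2]

lemma mem_Vbdiag_iff (hdiag : ∀ i : Fin r, Vb i i
      = Submodule.span ℝ {(1 : Matrix (Fin (n i)) (Fin (n i)) ℝ)}) (i : Fin r)
    (A : Matrix (Fin (n i)) (Fin (n i)) ℝ) :
    A ∈ Vb i i ↔ ∃ c : ℝ, A = c • 1 := by
  rw [hdiag i, Submodule.mem_span_singleton]
  constructor
  · rintro ⟨c, hc⟩; exact ⟨c, hc.symm⟩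
  · rintro ⟨c, hc⟩; exact ⟨c, hc.symm⟩

lemma Vset_blk_mem {X : Matrix (BIx n) (BIx n) ℝ} (hX : X ∈ Vset n Vb)
    {i j : Fin r} (h : i ≤ j) : blk X i j ∈ Vb i j := hX.2 i j h

/-- In `𝕋`, every "upper" block (including the diagonal) lies in the corresponding `Vb`. -/
lemma TTpp_blk_mem (hdiag : ∀ i : Fin r, Vb i i
      = Submodule.span ℝ {(1 : Matrix (Fin (n i)) (Fin (n i)) ℝ)})
    {T : Matrix (BIx n) (BIx n) ℝ} (hT : T ∈ TTpp n Vb) {i j : Fin r} (h : i ≤ j) :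
    blk T i j ∈ Vb i j := by
  rcases lt_or_eq_of_le h with h' | rfl
  · exact hT.2.2 i j h'
  · obtain ⟨c, _, hc⟩ := hT.2.1 i
    rw [hc, mem_Vbdiag_iff hdiag]
    exact ⟨c, rfl⟩

lemma TTpp_blk_lower {T : Matrix (BIx n) (BIx n) ℝ} (hT : T ∈ TTpp n Vb) {i j : Fin r}
    (h : j < i) : blk T i j = 0 := hT.1 i j h

/-- Polarization of axiom [V3]. -/
lemma polar_V3
    (hdiag : ∀ i : Fin r, Vb i i
      = Submodule.span ℝ {(1 : Matrix (Fin (n i)) (Fin (n i)) ℝ)})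
    (ax3 : ∀ i j : Fin r, i ≤ j → ∀ A ∈ Vb i j,
        ∃ c : ℝ, Aᵀ * A = c • (1 : Matrix (Fin (n j)) (Fin (n j)) ℝ))
    {i j : Fin r} (h : i ≤ j) {A B : Matrix (Fin (n i)) (Fin (n j)) ℝ}
    (hA : A ∈ Vb i j) (hB : B ∈ Vb i j) :
    Aᵀ * B + Bᵀ * A ∈ Vb j j := by
  obtain ⟨a, ha⟩ := ax3 i j h A hA
  obtain ⟨b, hb⟩ := ax3 i j h B hB
  obtain ⟨c, hc⟩ := ax3 i j h (A + B) (add_mem hA hB)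
  have key : Aᵀ * B + Bᵀ * A = (c - a - b) • 1 := by
    have expand : (A + B)ᵀ * (A + B) = Aᵀ * A + (Aᵀ * B + Bᵀ * A) + Bᵀ * B := by
      rw [Matrix.transpose_add, Matrix.add_mul, Matrix.mul_add, Matrix.mul_add]
      abel
    rw [expand, ha, hb] at hc
    have : Aᵀ * B + Bᵀ * A = c • 1 - a • 1 - b • 1 := by
      rw [← hc]; abel
    rw [this, sub_smul, sub_smul]
  rw [key, mem_Vbdiag_iff hdiag]
  exact ⟨c - a - b, rfl⟩

end Aux2
section Aux3

variable {n : Fin r → ℕ}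
variable {Vb : ∀ i j : Fin r, Submodule ℝ (Matrix (Fin (n i)) (Fin (n j)) ℝ)}

lemma conj_isSymm {T X : Matrix (BIx n) (BIx n) ℝ} (hX : X.IsSymm) :
    (Tᵀ * X * T).IsSymm := by
  show (Tᵀ * X * T)ᵀ = Tᵀ * X * T
  rw [Matrix.transpose_mul, Matrix.transpose_mul, Matrix.transpose_transpose,
    (hX : Xᵀ = X), Matrix.mul_assoc]

lemma blk_conj (T X : Matrix (BIx n) (BIx n) ℝ) (i j : Fin r) :
    blk (Tᵀ * X * T) i j
      = ∑ l : Fin r, ∑ k : Fin r, ((blk T k i)ᵀ * blk X k l) * blk T l j := by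
  rw [blk_mul]
  refine Finset.sum_congr rfl fun l _ => ?_
  rw [blk_mul, Matrix.sum_mul]
  refine Finset.sum_congr rfl fun k _ => ?_
  rw [blk_transpose]

/-- Axioms [V1]–[V3] imply that conjugation by `T ∈ 𝕋₊₊` preserves `V`. -/
lemma conj_mem_Vset
    (hdiag : ∀ i : Fin r, Vb i i
      = Submodule.span ℝ {(1 : Matrix (Fin (n i)) (Fin (n i)) ℝ)})
    (ax1 : ∀ i j k : Fin r, i ≤ j → j ≤ k → ∀ A ∈ Vb i j, ∀ B ∈ Vb j k, A * B ∈ Vb i k)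
    (ax2 : ∀ i j k : Fin r, i ≤ j → j < k → ∀ A ∈ Vb i j, ∀ B ∈ Vb i k, Aᵀ * B ∈ Vb j k)
    (ax3 : ∀ i j : Fin r, i ≤ j → ∀ A ∈ Vb i j,
        ∃ c : ℝ, Aᵀ * A = c • (1 : Matrix (Fin (n j)) (Fin (n j)) ℝ))
    {T X : Matrix (BIx n) (BIx n) ℝ} (hT : T ∈ TTpp n Vb) (hX : X ∈ Vset n Vb) :
    Tᵀ * X * T ∈ Vset n Vb := by
  have hTm : ∀ {k i : Fin r}, k ≤ i → blk T k i ∈ Vb k i := fun h => TTpp_blk_mem hdiag hT h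
  have hT0 : ∀ {i j : Fin r}, j < i → blk T i j = 0 := fun h => hT.1 _ _ h
  have hXm : ∀ {k l : Fin r}, k ≤ l → blk X k l ∈ Vb k l := fun h => hX.2 _ _ h
  have hXs : ∀ k l : Fin r, blk X k l = (blk X l k)ᵀ := fun k l => isSymm_blk hX.1 l k
  have hsymm : (Tᵀ * X * T).IsSymm := conj_isSymm hX.1
  refine ⟨hsymm, fun i j hij => ?_⟩
  rcases lt_or_eq_of_le hij with hlt | rfl
  · -- off-diagonal block
    rw [blk_conj]
    refine Submodule.sum_mem _ fun l _ => Submodule.sum_mem _ fun k _ => ?_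
    by_cases hki : k ≤ i
    swap
    · rw [hT0 (not_le.mp hki)]; simp
    by_cases hlj : l ≤ j
    swap
    · rw [hT0 (not_le.mp hlj)]; simp
    by_cases hkl : k ≤ l
    · have hB : blk X k l * blk T l j ∈ Vb k j :=
        ax1 k l j hkl hlj _ (hXm hkl) _ (TTpp_blk_mem hdiag hT hlj)
      have := ax2 k i j hki hlt _ (hTm hki) _ hB
      rw [Matrix.mul_assoc]
      exact this
    · have hlk : l ≤ k := le_of_not_ge hkl
      have hA : blk X l k * blk T k i ∈ Vb l i :=
        ax1 l k i hlk hki _ (hXm hlk) _ (hTm hki)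
      have hres := ax2 l i j (le_trans hlk hki) hlt _ hA _ (TTpp_blk_mem hdiag hT hlj)
      have heq : ((blk T k i)ᵀ * blk X k l) * blk T l j
          = (blk X l k * blk T k i)ᵀ * blk T l j := by
        rw [hXs k l, Matrix.transpose_mul]
      rw [heq]
      exact hres
  · -- diagonal block
    set Z := Tᵀ * X * T with hZ
    have hsym' : blk Z i i = (blk Z i i)ᵀ := isSymm_blk hsymm i i
    have key : blk Z i i + (blk Z i i)ᵀ ∈ Vb i i := by
      rw [blk_conj]
      rw [Matrix.transpose_sum, ← Finset.sum_add_distrib]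
      refine Submodule.sum_mem _ fun l _ => ?_
      rw [Matrix.transpose_sum, ← Finset.sum_add_distrib]
      refine Submodule.sum_mem _ fun k _ => ?_
      by_cases hki : k ≤ i
      swap
      · rw [hT0 (not_le.mp hki)]; simp
      by_cases hli : l ≤ i
      swap
      · rw [hT0 (not_le.mp hli)]; simp
      by_cases hkl : k ≤ l
      · have hB : blk X k l * blk T l i ∈ Vb k i :=
          ax1 k l i hkl hli _ (hXm hkl) _ (hTm hli)
        have hpol := polar_V3 hdiag ax3 hki (hTm hki) hB
        have heq : ((blk T k i)ᵀ * blk X k l) * blk T l i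
              + (((blk T k i)ᵀ * blk X k l) * blk T l i)ᵀ
            = (blk T k i)ᵀ * (blk X k l * blk T l i)
              + (blk X k l * blk T l i)ᵀ * blk T k i := by
          simp [Matrix.transpose_mul, Matrix.mul_assoc]
        rw [heq]
        exact hpol
      · have hlk : l ≤ k := le_of_not_ge hkl
        have hA : blk X l k * blk T k i ∈ Vb l i :=
          ax1 l k i hlk hki _ (hXm hlk) _ (hTm hki)
        have hpol := polar_V3 hdiag ax3 hli hA (hTm hli)
        have heq : ((blk T k i)ᵀ * blk X k l) * blk T l i
              + (((blk T k i)ᵀ * blk X k l) * blk T l i)ᵀ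
            = (blk X l k * blk T k i)ᵀ * blk T l i
              + (blk T l i)ᵀ * (blk X l k * blk T k i) := by
          rw [hXs k l]
          simp [Matrix.transpose_mul, Matrix.mul_assoc]
        rw [heq]
        exact hpol
    have : blk Z i i = (2⁻¹ : ℝ) • (blk Z i i + (blk Z i i)ᵀ) := by
      rw [← hsym', ← two_smul ℝ (blk Z i i), smul_smul]
      norm_num
    rw [this]
    exact Submodule.smul_mem _ _ key
end Aux3
section Aux4

variable {n : Fin r → ℕ}
variable {Vb : ∀ i j : Fin r, Submodule ℝ (Matrix (Fin (n i)) (Fin (n j)) ℝ)}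

/-- A weight function on block indices, strictly compatible with the block order. -/
def wt (n : Fin r → ℕ) (p : BIx n) : ℕ := (∑ m ∈ Finset.Iio p.1, n m) + p.2

lemma wt_lt_of_fst_lt {p q : BIx n} (h : p.1 < q.1) : wt n p < wt n q := by
  have hsub : insert p.1 (Finset.Iio p.1) ⊆ Finset.Iio q.1 := by
    intro m hm
    rcases Finset.mem_insert.mp hm with rfl | hm'
    · exact Finset.mem_Iio.mpr h
    · exact Finset.mem_Iio.mpr (lt_trans (Finset.mem_Iio.mp hm') h)
  have h1 : (∑ m ∈ Finset.Iio p.1, n m) + n p.1 ≤ ∑ m ∈ Finset.Iio q.1, n m := by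
    calc (∑ m ∈ Finset.Iio p.1, n m) + n p.1
        = ∑ m ∈ insert p.1 (Finset.Iio p.1), n m := by
          rw [Finset.sum_insert (by simp)]; ring
      _ ≤ ∑ m ∈ Finset.Iio q.1, n m :=
          Finset.sum_le_sum_of_subset hsub
  have h2 : wt n p < (∑ m ∈ Finset.Iio p.1, n m) + n p.1 :=
    Nat.add_lt_add_left p.2.2 _
  exact lt_of_lt_of_le h2 (le_trans h1 (Nat.le_add_right _ _))

lemma wt_fst_le {p q : BIx n} (h : wt n p ≤ wt n q) : p.1 ≤ q.1 := by
  by_contra hc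
  exact absurd (wt_lt_of_fst_lt (not_le.mp hc)) (not_lt.mpr h)

lemma wt_injective : Function.Injective (wt (r := r) n) := by
  rintro ⟨i, a⟩ ⟨j, b⟩ h
  have hij : i = j := le_antisymm (wt_fst_le (le_of_eq h)) (wt_fst_le (le_of_eq h.symm))
  subst hij
  have : (a : ℕ) = b := by
    have := h
    unfold wt at this
    simpa using this
  simp [Fin.ext_iff, this]

lemma TTpp_entry_zero {T : Matrix (BIx n) (BIx n) ℝ} (hT : T ∈ TTpp n Vb)
    {p q : BIx n} (h : wt n q < wt n p) : T p q = 0 := by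
  obtain ⟨i, a⟩ := p
  obtain ⟨j, b⟩ := q
  have hji : j ≤ i := wt_fst_le (le_of_lt h)
  rcases lt_or_eq_of_le hji with hlt | rfl
  · have := hT.1 i j hlt
    exact congrFun (congrFun this a) b
  · obtain ⟨c, _, hc⟩ := hT.2.1 j
    have hba : b ≠ a := by
      intro hba
      subst hba
      exact lt_irrefl _ h
    have := congrFun (congrFun hc a) b
    simp only [blk_apply] at this
    rw [this, Matrix.smul_apply, Matrix.one_apply_ne' (by simpa [Fin.ext_iff, eq_comm] using hba)]
    simp

lemma TTpp_diag_pos {T : Matrix (BIx n) (BIx n) ℝ} (hT : T ∈ TTpp n Vb)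
    (p : BIx n) : 0 < T p p := by
  obtain ⟨i, a⟩ := p
  obtain ⟨c, hc, hcc⟩ := hT.2.1 i
  have := congrFun (congrFun hcc a) a
  simp only [blk_apply] at this
  rw [this, Matrix.smul_apply, Matrix.one_apply_eq]
  simpa using hc

lemma TTpp_det_pos {T : Matrix (BIx n) (BIx n) ℝ} (hT : T ∈ TTpp n Vb) :
    0 < T.det := by
  letI lo : LinearOrder (BIx n) := LinearOrder.lift' (wt n) wt_injective
  have hut : @Matrix.BlockTriangular (BIx n) (BIx n) ℝ lo.toLT _ T id := by
    intro p q hpq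
    exact TTpp_entry_zero (p := p) (q := q) hT hpq
  rw [Matrix.det_of_isUpperTriangular (M := T) hut]
  exact Finset.prod_pos fun p _ => TTpp_diag_pos hT p

lemma TTpp_isUnit_det {T : Matrix (BIx n) (BIx n) ℝ} (hT : T ∈ TTpp n Vb) :
    IsUnit T.det := isUnit_iff_ne_zero.mpr (ne_of_gt (TTpp_det_pos hT))

lemma TTpp_mul_inv {T : Matrix (BIx n) (BIx n) ℝ} (hT : T ∈ TTpp n Vb) :
    T * T⁻¹ = 1 := Matrix.mul_nonsing_inv T (TTpp_isUnit_det hT)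

lemma TTpp_inv_mul {T : Matrix (BIx n) (BIx n) ℝ} (hT : T ∈ TTpp n Vb) :
    T⁻¹ * T = 1 := Matrix.nonsing_inv_mul T (TTpp_isUnit_det hT)

end Aux4
section Aux5

variable {n : Fin r → ℕ}
variable {Vb : ∀ i j : Fin r, Submodule ℝ (Matrix (Fin (n i)) (Fin (n j)) ℝ)}

/-- `𝕋₊₊` is closed under multiplication, given axiom [V1]. -/
lemma TTpp_mul_mem
    (hdiag : ∀ i : Fin r, Vb i i
      = Submodule.span ℝ {(1 : Matrix (Fin (n i)) (Fin (n i)) ℝ)})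
    (ax1 : ∀ i j k : Fin r, i ≤ j → j ≤ k → ∀ A ∈ Vb i j, ∀ B ∈ Vb j k, A * B ∈ Vb i k)
    {T U : Matrix (BIx n) (BIx n) ℝ} (hT : T ∈ TTpp n Vb) (hU : U ∈ TTpp n Vb) :
    T * U ∈ TTpp n Vb := by
  refine ⟨fun i j hji => ?_, fun i => ?_, fun i j hij => ?_⟩
  · rw [blk_mul]
    refine Finset.sum_eq_zero fun k _ => ?_
    by_cases hk : k < i
    · rw [hT.1 i k hk, Matrix.zero_mul]
    · rw [hU.1 k j (lt_of_lt_of_le hji (not_lt.mp hk)), Matrix.mul_zero]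
  · obtain ⟨c, hc, hcc⟩ := hT.2.1 i
    obtain ⟨d, hd, hdd⟩ := hU.2.1 i
    refine ⟨c * d, mul_pos hc hd, ?_⟩
    rw [blk_mul]
    rw [Finset.sum_eq_single i]
    · rw [hcc, hdd, Matrix.smul_mul, Matrix.mul_smul, smul_smul, Matrix.mul_one]
    · intro k _ hk
      rcases lt_or_gt_of_ne hk with h | h
      · rw [hT.1 i k h, Matrix.zero_mul]
      · rw [hU.1 k i h, Matrix.mul_zero]
    · intro h; exact absurd (Finset.mem_univ i) h
  · rw [blk_mul]
    refine Submodule.sum_mem _ fun k _ => ?_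
    by_cases hik : i ≤ k
    · by_cases hkj : k ≤ j
      · exact ax1 i k j hik hkj _ (TTpp_blk_mem hdiag hT hik) _ (TTpp_blk_mem hdiag hU hkj)
      · rw [hU.1 k j (not_le.mp hkj), Matrix.mul_zero]; exact Submodule.zero_mem _
    · rw [hT.1 i k (not_le.mp hik), Matrix.zero_mul]; exact Submodule.zero_mem _

/-- The inverse of an element of `𝕋₊₊` lies in `𝕋₊₊`, given axiom [V1]. -/
lemma TTpp_inv_mem
    (hdiag : ∀ i : Fin r, Vb i i
      = Submodule.span ℝ {(1 : Matrix (Fin (n i)) (Fin (n i)) ℝ)})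
    (ax1 : ∀ i j k : Fin r, i ≤ j → j ≤ k → ∀ A ∈ Vb i j, ∀ B ∈ Vb j k, A * B ∈ Vb i k)
    {T : Matrix (BIx n) (BIx n) ℝ} (hT : T ∈ TTpp n Vb) :
    T⁻¹ ∈ TTpp n Vb := by
  set U := T⁻¹ with hUdef
  have hTU : T * U = 1 := TTpp_mul_inv hT
  -- lower blocks of U vanish
  have hUlow : ∀ i j : Fin r, j < i → blk U i j = 0 := by
    letI := Matrix.invertibleOfIsUnitDet T (TTpp_isUnit_det hT)
    have hbt : T.BlockTriangular Sigma.fst := by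
      intro p q hpq
      exact congrFun (congrFun (hT.1 p.1 q.1 hpq) p.2) q.2
    have hbti := Matrix.blockTriangular_inv_of_blockTriangular hbt
    intro i j hji
    ext a b
    exact hbti (show (⟨j, b⟩ : BIx n).1 < (⟨i, a⟩ : BIx n).1 from hji)
  -- extract the diagonal scalars of T
  choose cT hcT hccT using hT.2.1
  -- diagonal blocks of U
  have hUdiag : ∀ i : Fin r, blk U i i = (cT i)⁻¹ • 1 := by
    intro i
    have h1 : blk (T * U) i i = 1 := by rw [hTU, blk_one_diag]
    rw [blk_mul, Finset.sum_eq_single i] at h1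
    · rw [hccT i, Matrix.smul_mul] at h1
      have : (cT i)⁻¹ • ((cT i) • ((1 : Matrix (Fin (n i)) (Fin (n i)) ℝ) * blk U i i))
          = (cT i)⁻¹ • (1 : Matrix (Fin (n i)) (Fin (n i)) ℝ) := by rw [h1]
      rw [smul_smul, inv_mul_cancel₀ (ne_of_gt (hcT i)), one_smul, Matrix.one_mul] at this
      rw [this]
    · intro k _ hk
      rcases lt_or_gt_of_ne hk with h | h
      · rw [hT.1 i k h, Matrix.zero_mul]
      · rw [hUlow k i h, Matrix.mul_zero]
    · intro h; exact absurd (Finset.mem_univ i) h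
  -- upper blocks of U, by strong induction on the distance
  have hUup : ∀ d : ℕ, ∀ i j : Fin r, i ≤ j → j.1 - i.1 ≤ d → blk U i j ∈ Vb i j := by
    intro d
    induction d with
    | zero =>
      intro i j hij hd
      have : i = j := le_antisymm hij (by rw [Fin.le_def]; omega)
      subst this
      rw [hUdiag i, mem_Vbdiag_iff hdiag]
      exact ⟨(cT i)⁻¹, rfl⟩
    | succ d ih =>
      intro i j hij hd
      by_cases hdd : j.1 - i.1 ≤ d
      · exact ih i j hij hdd
      have hlt : i < j := by
        rcases lt_or_eq_of_le hij with h | rfl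
        · exact h
        · omega
      have h0 : blk (T * U) i j = 0 := by rw [hTU, blk_one_offdiag (ne_of_lt hlt)]
      rw [blk_mul] at h0
      rw [← Finset.add_sum_erase _ _ (Finset.mem_univ i)] at h0
      have hsolve : blk U i j
          = (cT i)⁻¹ • (- ∑ k ∈ Finset.univ.erase i, blk T i k * blk U k j) := by
        have h1 : blk T i i * blk U i j
            = - ∑ k ∈ Finset.univ.erase i, blk T i k * blk U k j := by
          rw [eq_neg_iff_add_eq_zero]; exact h0
        rw [hccT i, Matrix.smul_mul, Matrix.one_mul] at h1
        rw [← h1, smul_smul, inv_mul_cancel₀ (ne_of_gt (hcT i)), one_smul]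
      rw [hsolve]
      refine Submodule.smul_mem _ _ (Submodule.neg_mem _ (Submodule.sum_mem _ fun k hk => ?_))
      have hki : k ≠ i := Finset.ne_of_mem_erase hk
      by_cases hik : i ≤ k
      · have hik' : i < k := lt_of_le_of_ne hik (Ne.symm hki)
        by_cases hkj : k ≤ j
        · have hUkj : blk U k j ∈ Vb k j := by
            refine ih k j hkj ?_
            have := hik'
            omega
          exact ax1 i k j hik hkj _ (TTpp_blk_mem hdiag hT hik) _ hUkj
        · rw [hUlow k j (not_le.mp hkj), Matrix.mul_zero]; exact Submodule.zero_mem _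
      · rw [hT.1 i k (not_le.mp hik), Matrix.zero_mul]; exact Submodule.zero_mem _
  refine ⟨hUlow, fun i => ⟨(cT i)⁻¹, inv_pos.mpr (hcT i), hUdiag i⟩, fun i j hij => ?_⟩
  exact hUup (j.1 - i.1) i j (le_of_lt hij) le_rfl

end Aux5
section Aux6

variable {n : Fin r → ℕ}
variable {Vb : ∀ i j : Fin r, Submodule ℝ (Matrix (Fin (n i)) (Fin (n j)) ℝ)}

lemma conj_comp (T U X : Matrix (BIx n) (BIx n) ℝ) :
    Uᵀ * (Tᵀ * X * T) * U = (T * U)ᵀ * X * (T * U) := by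
  rw [Matrix.transpose_mul]
  simp only [Matrix.mul_assoc]

lemma dotProduct_conj (T X : Matrix (BIx n) (BIx n) ℝ) (x : BIx n → ℝ) :
    x ⬝ᵥ (Tᵀ * X * T) *ᵥ x = (T *ᵥ x) ⬝ᵥ X *ᵥ (T *ᵥ x) := by
  rw [← Matrix.mulVec_mulVec, ← Matrix.mulVec_mulVec, Matrix.dotProduct_mulVec (A := Tᵀ),
    Matrix.vecMul_transpose]

lemma conj_posDef {T X : Matrix (BIx n) (BIx n) ℝ} (hdet : IsUnit T.det)
    (hX : X.PosDef) : (Tᵀ * X * T).PosDef := by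
  have hs : Xᵀ = X := by
    have := hX.1
    rwa [Matrix.IsHermitian, Matrix.conjTranspose_eq_transpose_of_trivial] at this
  refine Matrix.PosDef.of_dotProduct_mulVec_pos ?_ (fun x hx => ?_)
  · rw [Matrix.IsHermitian, Matrix.conjTranspose_eq_transpose_of_trivial]
    exact conj_isSymm (hs : X.IsSymm)
  · have hTx : T *ᵥ x ≠ 0 := by
      intro h0
      have := Matrix.mulVec_injective_iff_isUnit.mpr (isUnit_iff_isUnit_det _ |>.2 hdet)
      exact hx (this (by rw [h0, Matrix.mulVec_zero]))
    have := hX.dotProduct_mulVec_pos hTx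
    rw [star_trivial] at this ⊢
    rw [dotProduct_conj]
    exact this

/-- Conjugation by `T ∈ 𝕋₊₊` is a bijection of `K` onto itself (given the axioms). -/
lemma conj_bijOn
    (hdiag : ∀ i : Fin r, Vb i i
      = Submodule.span ℝ {(1 : Matrix (Fin (n i)) (Fin (n i)) ℝ)})
    (ax1 : ∀ i j k : Fin r, i ≤ j → j ≤ k → ∀ A ∈ Vb i j, ∀ B ∈ Vb j k, A * B ∈ Vb i k)
    (ax2 : ∀ i j k : Fin r, i ≤ j → j < k → ∀ A ∈ Vb i j, ∀ B ∈ Vb i k, Aᵀ * B ∈ Vb j k)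
    (ax3 : ∀ i j : Fin r, i ≤ j → ∀ A ∈ Vb i j,
        ∃ c : ℝ, Aᵀ * A = c • (1 : Matrix (Fin (n j)) (Fin (n j)) ℝ))
    {T : Matrix (BIx n) (BIx n) ℝ} (hT : T ∈ TTpp n Vb) :
    Set.BijOn (fun X => Tᵀ * X * T) (Kcone n Vb) (Kcone n Vb) := by
  have hdet : IsUnit T.det := TTpp_isUnit_det hT
  have hmaps : ∀ {S : Matrix (BIx n) (BIx n) ℝ}, S ∈ TTpp n Vb →
      ∀ X ∈ Kcone n Vb, Sᵀ * X * S ∈ Kcone n Vb := by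
    intro S hS X hX
    exact ⟨conj_posDef (TTpp_isUnit_det hS) hX.1, conj_mem_Vset hdiag ax1 ax2 ax3 hS hX.2⟩
  have hTi : T⁻¹ ∈ TTpp n Vb := TTpp_inv_mem hdiag ax1 hT
  have hcc : ∀ X : Matrix (BIx n) (BIx n) ℝ, (T⁻¹)ᵀ * (Tᵀ * X * T) * T⁻¹ = X := by
    intro X
    rw [conj_comp, TTpp_mul_inv hT]
    simp
  refine ⟨fun X hX => hmaps hT X hX, fun X hX Y hY h => ?_, fun Y hY => ?_⟩
  · simp only at h
    calc X = (T⁻¹)ᵀ * (Tᵀ * X * T) * T⁻¹ := (hcc X).symm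
      _ = (T⁻¹)ᵀ * (Tᵀ * Y * T) * T⁻¹ := by rw [h]
      _ = Y := hcc Y
  · refine ⟨(T⁻¹)ᵀ * Y * T⁻¹, hmaps hTi Y hY, ?_⟩
    show Tᵀ * ((T⁻¹)ᵀ * Y * T⁻¹) * T = Y
    rw [conj_comp, TTpp_inv_mul hT]
    simp
end Aux6
section Chol

variable {n : Fin r → ℕ}
variable {Vb : ∀ i j : Fin r, Submodule ℝ (Matrix (Fin (n i)) (Fin (n j)) ℝ)}

/-- The `i`-th block row of the Cholesky factor of `X`, defined by recursion on `i`. -/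
noncomputable def Trow (hn : ∀ i, 0 < n i) (X : Matrix (BIx n) (BIx n) ℝ) (i : Fin r) :
    Matrix (BIx n) (BIx n) ℝ :=
  let R : Matrix (BIx n) (BIx n) ℝ :=
    X - ∑ m : Fin r, if h : m < i then (Trow hn X m)ᵀ * Trow hn X m else 0
  Matrix.of fun p q =>
    if p.1 = i ∧ i ≤ q.1 then (Real.sqrt (R ⟨i, ⟨0, hn i⟩⟩ ⟨i, ⟨0, hn i⟩⟩))⁻¹ * R p q else 0
termination_by i.1
decreasing_by exact h

/-- The `i`-th Schur-complement remainder. -/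
noncomputable def Rmat (hn : ∀ i, 0 < n i) (X : Matrix (BIx n) (BIx n) ℝ) (i : Fin r) :
    Matrix (BIx n) (BIx n) ℝ :=
  X - ∑ m : Fin r, if m < i then (Trow hn X m)ᵀ * Trow hn X m else 0

/-- The `i`-th pivot. -/
noncomputable def dval (hn : ∀ i, 0 < n i) (X : Matrix (BIx n) (BIx n) ℝ) (i : Fin r) : ℝ :=
  Rmat hn X i ⟨i, ⟨0, hn i⟩⟩ ⟨i, ⟨0, hn i⟩⟩

lemma Trow_def (hn : ∀ i, 0 < n i) (X : Matrix (BIx n) (BIx n) ℝ) (i : Fin r) :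
    Trow hn X i = Matrix.of fun p q =>
      if p.1 = i ∧ i ≤ q.1 then (Real.sqrt (dval hn X i))⁻¹ * Rmat hn X i p q else 0 := by
  rw [Trow]
  simp only [dite_eq_ite]
  rfl

lemma Trow_apply_zero (hn : ∀ i, 0 < n i) (X : Matrix (BIx n) (BIx n) ℝ) (i : Fin r)
    {p q : BIx n} (h : ¬(p.1 = i ∧ i ≤ q.1)) : Trow hn X i p q = 0 := by
  rw [Trow_def]
  simp only [Matrix.of_apply, if_neg h]

lemma Trow_apply (hn : ∀ i, 0 < n i) (X : Matrix (BIx n) (BIx n) ℝ) (i : Fin r)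
    {p q : BIx n} (hp : p.1 = i) (hq : i ≤ q.1) :
    Trow hn X i p q = (Real.sqrt (dval hn X i))⁻¹ * Rmat hn X i p q := by
  rw [Trow_def]
  have hc : p.1 = i ∧ i ≤ q.1 := ⟨hp, hq⟩
  simp only [Matrix.of_apply, if_pos hc]

end Chol
section Chol2

variable {n : Fin r → ℕ}
variable {Vb : ∀ i j : Fin r, Submodule ℝ (Matrix (Fin (n i)) (Fin (n j)) ℝ)}

lemma G_apply (hn : ∀ i, 0 < n i) (X : Matrix (BIx n) (BIx n) ℝ) (m : Fin r) (p q : BIx n) :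
    ((Trow hn X m)ᵀ * Trow hn X m) p q
      = ∑ c : Fin (n m), Trow hn X m ⟨m, c⟩ p * Trow hn X m ⟨m, c⟩ q := by
  rw [Matrix.mul_apply, ← Finset.univ_sigma_univ, Finset.sum_sigma]
  rw [Finset.sum_eq_single m]
  · simp [Matrix.transpose_apply]
  · intro k _ hk
    refine Finset.sum_eq_zero fun c _ => ?_
    rw [Matrix.transpose_apply, Trow_apply_zero hn X m (by simp [hk])]
    simp
  · intro h; exact absurd (Finset.mem_univ m) h

lemma G_apply_zero_left (hn : ∀ i, 0 < n i) (X : Matrix (BIx n) (BIx n) ℝ) {m : Fin r}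
    {p : BIx n} (h : p.1 < m) (q : BIx n) : ((Trow hn X m)ᵀ * Trow hn X m) p q = 0 := by
  rw [G_apply]
  refine Finset.sum_eq_zero fun c _ => ?_
  rw [Trow_apply_zero hn X m (fun hc => absurd hc.2 (not_le.mpr h))]
  simp

lemma G_apply_zero_right (hn : ∀ i, 0 < n i) (X : Matrix (BIx n) (BIx n) ℝ) {m : Fin r}
    {q : BIx n} (h : q.1 < m) (p : BIx n) : ((Trow hn X m)ᵀ * Trow hn X m) p q = 0 := by
  rw [G_apply]
  refine Finset.sum_eq_zero fun c _ => ?_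
  rw [Trow_apply_zero hn X m (q := q) (fun hc => absurd hc.2 (not_le.mpr h))]
  simp

lemma G_transpose (hn : ∀ i, 0 < n i) (X : Matrix (BIx n) (BIx n) ℝ) (m : Fin r) :
    ((Trow hn X m)ᵀ * Trow hn X m)ᵀ = (Trow hn X m)ᵀ * Trow hn X m := by
  rw [Matrix.transpose_mul, Matrix.transpose_transpose]

lemma Rmat_transpose (hn : ∀ i, 0 < n i) {X : Matrix (BIx n) (BIx n) ℝ} (hX : X.IsSymm)
    (i : Fin r) : (Rmat hn X i)ᵀ = Rmat hn X i := by
  unfold Rmat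
  rw [Matrix.transpose_sub, (hX : Xᵀ = X), Matrix.transpose_sum]
  congr 1
  refine Finset.sum_congr rfl fun m _ => ?_
  rw [apply_ite Matrix.transpose, G_transpose, Matrix.transpose_zero]

lemma Rmat_base (hn : ∀ i, 0 < n i) (X : Matrix (BIx n) (BIx n) ℝ) {i : Fin r}
    (h : i.1 = 0) : Rmat hn X i = X := by
  unfold Rmat
  rw [Finset.sum_eq_zero fun m _ => if_neg (by rw [Fin.lt_def]; omega), sub_zero]

lemma Rmat_split (hn : ∀ i, 0 < n i) (X : Matrix (BIx n) (BIx n) ℝ) {j i : Fin r}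
    (hji : j ≤ i) : Rmat hn X i = Rmat hn X j
      - ∑ m : Fin r, if j ≤ m ∧ m < i then (Trow hn X m)ᵀ * Trow hn X m else 0 := by
  unfold Rmat
  rw [sub_sub]
  congr 1
  rw [← Finset.sum_add_distrib]
  refine Finset.sum_congr rfl fun m _ => ?_
  by_cases h1 : m < j
  · have h2 : m < i := lt_of_lt_of_le h1 hji
    have h3 : ¬(j ≤ m ∧ m < i) := fun hc => absurd h1 (not_lt.mpr hc.1)
    rw [if_pos h2, if_pos h1, if_neg h3, add_zero]
  · by_cases h2 : m < i
    · have h3 : j ≤ m ∧ m < i := ⟨not_lt.mp h1, h2⟩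
      rw [if_pos h2, if_neg h1, if_pos h3, zero_add]
    · have h3 : ¬(j ≤ m ∧ m < i) := fun hc => absurd hc.2 h2
      rw [if_neg h2, if_neg h1, if_neg h3, add_zero]

lemma Rmat_succ (hn : ∀ i, 0 < n i) (X : Matrix (BIx n) (BIx n) ℝ) {k i : Fin r}
    (h : k.1 + 1 = i.1) :
    Rmat hn X i = Rmat hn X k - (Trow hn X k)ᵀ * Trow hn X k := by
  have hki : k ≤ i := by rw [Fin.le_def]; omega
  rw [Rmat_split hn X hki]
  congr 1
  have hpt : ∀ m : Fin r, (if k ≤ m ∧ m < i then (Trow hn X m)ᵀ * Trow hn X m else 0)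
      = if m = k then (Trow hn X m)ᵀ * Trow hn X m else 0 := by
    intro m
    by_cases hm : m = k
    · subst hm
      have : m ≤ m ∧ m < i := ⟨le_rfl, by rw [Fin.lt_def]; omega⟩
      rw [if_pos this, if_pos rfl]
    · have : ¬(k ≤ m ∧ m < i) := by
        rintro ⟨h1, h2⟩
        rw [Fin.le_def] at h1
        rw [Fin.lt_def] at h2
        exact hm (Fin.ext (by omega))
      rw [if_neg this, if_neg hm]
  rw [Finset.sum_congr rfl fun m _ => hpt m, Finset.sum_ite_eq' Finset.univ k
    (fun m => (Trow hn X m)ᵀ * Trow hn X m), if_pos (Finset.mem_univ k)]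

end Chol2
section Chol3

variable {n : Fin r → ℕ}
variable {Vb : ∀ i j : Fin r, Submodule ℝ (Matrix (Fin (n i)) (Fin (n j)) ℝ)}

/-- The inductive invariant for the block Cholesky recursion. -/
def CholP (Vb : ∀ i j : Fin r, Submodule ℝ (Matrix (Fin (n i)) (Fin (n j)) ℝ))
    (hn : ∀ i, 0 < n i) (X : Matrix (BIx n) (BIx n) ℝ) (i : Fin r) : Prop :=
  (∀ p q : BIx n, p.1 < i → Rmat hn X i p q = 0) ∧
  (∀ k l : Fin r, k ≤ l → blk (Rmat hn X i) k l ∈ Vb k l) ∧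
  (blk (Rmat hn X i) i i = dval hn X i • 1) ∧
  (0 < dval hn X i) ∧
  (∀ v : BIx n → ℝ, v ≠ 0 → (∀ p : BIx n, p.1 < i → v p = 0) →
    0 < v ⬝ᵥ Rmat hn X i *ᵥ v)

lemma blk_Trow_ne (hn : ∀ i, 0 < n i) (X : Matrix (BIx n) (BIx n) ℝ) {m s j : Fin r}
    (h : s ≠ m) : blk (Trow hn X m) s j = 0 := by
  ext a b
  rw [blk_apply, Trow_apply_zero hn X m (fun hc => h hc.1)]
  rfl

lemma blk_Trow (hn : ∀ i, 0 < n i) (X : Matrix (BIx n) (BIx n) ℝ) {m k : Fin r}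
    (hmk : m ≤ k) : blk (Trow hn X m) m k
      = (Real.sqrt (dval hn X m))⁻¹ • blk (Rmat hn X m) m k := by
  ext a b
  rw [blk_apply, Trow_apply hn X m rfl hmk]
  rfl

lemma blk_Trow_lower (hn : ∀ i, 0 < n i) (X : Matrix (BIx n) (BIx n) ℝ) {m k : Fin r}
    (h : ¬ m ≤ k) : blk (Trow hn X m) m k = 0 := by
  ext a b
  rw [blk_apply, Trow_apply_zero hn X m (fun hc => h hc.2)]
  rfl

lemma blk_G (hn : ∀ i, 0 < n i) (X : Matrix (BIx n) (BIx n) ℝ) (m k l : Fin r) :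
    blk ((Trow hn X m)ᵀ * Trow hn X m) k l
      = (blk (Trow hn X m) m k)ᵀ * blk (Trow hn X m) m l := by
  ext a b
  rw [blk_apply, G_apply, Matrix.mul_apply]
  exact Finset.sum_congr rfl fun c _ => rfl

lemma Rmat_entry_diag (hn : ∀ i, 0 < n i) {X : Matrix (BIx n) (BIx n) ℝ} {m : Fin r}
    (he : blk (Rmat hn X m) m m = dval hn X m • 1) (c a : Fin (n m)) :
    Rmat hn X m ⟨m, c⟩ ⟨m, a⟩ = if c = a then dval hn X m else 0 := by
  have := congrFun (congrFun he c) a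
  rw [blk_apply] at this
  rw [this, Matrix.smul_apply, Matrix.one_apply]
  simp [mul_ite]

lemma sqrt_inv_sq (d : ℝ) (hd : 0 < d) :
    (Real.sqrt d)⁻¹ * ((Real.sqrt d)⁻¹ * d) = 1 := by
  rw [← mul_assoc, ← mul_inv, Real.mul_self_sqrt hd.le, inv_mul_cancel₀ (ne_of_gt hd)]

/-- On rows in block `m`, the Gram matrix of `Trow m` reproduces `Rmat m`. -/
lemma GR_row (hn : ∀ i, 0 < n i) {X : Matrix (BIx n) (BIx n) ℝ} (hXs : X.IsSymm)
    {m : Fin r} (hP : CholP Vb hn X m) :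
    ∀ p q : BIx n, p.1 = m → ((Trow hn X m)ᵀ * Trow hn X m) p q = Rmat hn X m p q := by
  obtain ⟨hc, hb, he, ha, hpd⟩ := hP
  rintro ⟨pm, a⟩ q hp
  dsimp only at hp
  subst hp
  by_cases hq : pm ≤ q.1
  · rw [G_apply]
    have hterm : ∀ c : Fin (n pm), Trow hn X pm ⟨pm, c⟩ ⟨pm, a⟩ * Trow hn X pm ⟨pm, c⟩ q
        = (if c = a then (Real.sqrt (dval hn X pm))⁻¹ * dval hn X pm else 0)
          * ((Real.sqrt (dval hn X pm))⁻¹ * Rmat hn X pm ⟨pm, c⟩ q) := by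
      intro c
      rw [Trow_apply hn X pm rfl (le_refl pm), Trow_apply hn X pm rfl hq,
        Rmat_entry_diag hn he c a]
      split_ifs <;> ring
    rw [Finset.sum_congr rfl fun c _ => hterm c]
    have hcollapse : ∀ c : Fin (n pm),
        (if c = a then (Real.sqrt (dval hn X pm))⁻¹ * dval hn X pm else 0)
          * ((Real.sqrt (dval hn X pm))⁻¹ * Rmat hn X pm ⟨pm, c⟩ q)
        = if c = a then ((Real.sqrt (dval hn X pm))⁻¹ * dval hn X pm)
            * ((Real.sqrt (dval hn X pm))⁻¹ * Rmat hn X pm ⟨pm, c⟩ q) else 0 := by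
      intro c
      split_ifs <;> ring
    rw [Finset.sum_congr rfl fun c _ => hcollapse c, Finset.sum_ite_eq'
      Finset.univ a _, if_pos (Finset.mem_univ a)]
    have : ((Real.sqrt (dval hn X pm))⁻¹ * dval hn X pm)
          * ((Real.sqrt (dval hn X pm))⁻¹ * Rmat hn X pm ⟨pm, a⟩ q)
        = ((Real.sqrt (dval hn X pm))⁻¹ * ((Real.sqrt (dval hn X pm))⁻¹ * dval hn X pm))
          * Rmat hn X pm ⟨pm, a⟩ q := by ring
    rw [this, sqrt_inv_sq _ ha, one_mul]
  · have hql : q.1 < pm := not_le.mp hq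
    rw [G_apply_zero_right hn X hql]
    have hsym := congrFun (congrFun (Rmat_transpose hn hXs pm) q) ⟨pm, a⟩
    rw [Matrix.transpose_apply] at hsym
    rw [hsym, hc q _ hql]

lemma GR_col (hn : ∀ i, 0 < n i) {X : Matrix (BIx n) (BIx n) ℝ} (hXs : X.IsSymm)
    {m : Fin r} (hP : CholP Vb hn X m) :
    ∀ p q : BIx n, q.1 = m → ((Trow hn X m)ᵀ * Trow hn X m) p q = Rmat hn X m p q := by
  intro p q hq
  have h1 := congrFun (congrFun (G_transpose hn X m) q) p
  rw [Matrix.transpose_apply] at h1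
  have h2 := congrFun (congrFun (Rmat_transpose hn hXs m) q) p
  rw [Matrix.transpose_apply] at h2
  rw [h1, h2]
  exact GR_row hn hXs hP q p hq

end Chol3
section Chol4

variable {n : Fin r → ℕ}
variable {Vb : ∀ i j : Fin r, Submodule ℝ (Matrix (Fin (n i)) (Fin (n j)) ℝ)}

lemma mulVec_apply' {ι : Type*} [Fintype ι] (M : Matrix ι ι ℝ) (v : ι → ℝ) (p : ι) :
    (M *ᵥ v) p = ∑ q, M p q * v q := rfl

lemma dotProduct_apply' {ι : Type*} [Fintype ι] (v w : ι → ℝ) :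
    v ⬝ᵥ w = ∑ q, v q * w q := rfl

/-- The main induction establishing the Cholesky invariant for all block indices. -/
lemma chol_main (hn : ∀ i, 0 < n i)
    (hdiag : ∀ i : Fin r, Vb i i
      = Submodule.span ℝ {(1 : Matrix (Fin (n i)) (Fin (n i)) ℝ)})
    (ax2 : ∀ i j k : Fin r, i ≤ j → j < k → ∀ A ∈ Vb i j, ∀ B ∈ Vb i k, Aᵀ * B ∈ Vb j k)
    (ax3 : ∀ i j : Fin r, i ≤ j → ∀ A ∈ Vb i j,
        ∃ c : ℝ, Aᵀ * A = c • (1 : Matrix (Fin (n j)) (Fin (n j)) ℝ))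
    {X : Matrix (BIx n) (BIx n) ℝ} (hX : X ∈ Kcone n Vb) :
    ∀ i : Fin r, CholP Vb hn X i := by
  have main : ∀ N : ℕ, ∀ i : Fin r, i.1 = N → CholP Vb hn X i := by
    intro N
    induction N using Nat.strong_induction_on with
    | _ N IHN =>
    intro i hi
    have IH : ∀ m : Fin r, m < i → CholP Vb hn X m := fun m hm =>
      IHN m.1 (by rw [← hi]; exact hm) m rfl
    -- (c) vanishing of early rows
    have hc : ∀ p q : BIx n, p.1 < i → Rmat hn X i p q = 0 := by
      intro p q hp
      have hle : p.1 ≤ i := hp.le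
      have hentry := congrFun (congrFun (Rmat_split hn X hle) p) q
      rw [Matrix.sub_apply, Matrix.sum_apply] at hentry
      have hite : ∀ m : Fin r,
          (if p.1 ≤ m ∧ m < i then (Trow hn X m)ᵀ * Trow hn X m else 0) p q
          = if p.1 ≤ m ∧ m < i then ((Trow hn X m)ᵀ * Trow hn X m) p q else 0 := by
        intro m; split_ifs <;> rfl
      rw [Finset.sum_congr rfl fun m _ => hite m] at hentry
      have hsum : ∑ m : Fin r,
          (if p.1 ≤ m ∧ m < i then ((Trow hn X m)ᵀ * Trow hn X m) p q else 0)
          = Rmat hn X p.1 p q := by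
        rw [Finset.sum_eq_single p.1]
        · have hcnd : p.1 ≤ p.1 ∧ p.1 < i := ⟨le_rfl, hp⟩
          rw [if_pos hcnd, GR_row hn hX.2.1 (IH p.1 hp) p q rfl]
        · intro m _ hm
          by_cases hcond : p.1 ≤ m ∧ m < i
          · rw [if_pos hcond, G_apply_zero_left hn X (lt_of_le_of_ne hcond.1 (Ne.symm hm))]
          · rw [if_neg hcond]
        · intro h; exact absurd (Finset.mem_univ _) h
      rw [hsum] at hentry
      rw [hentry, sub_self]
    -- (b) blocks lie in V
    have hb : ∀ k l : Fin r, k ≤ l → blk (Rmat hn X i) k l ∈ Vb k l := by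
      intro k l hkl
      unfold Rmat
      rw [blk_sub, blk_sum]
      refine Submodule.sub_mem _ (hX.2.2 k l hkl) (Submodule.sum_mem _ fun m _ => ?_)
      rw [apply_ite (fun M => blk M k l), blk_zero]
      by_cases hmi : m < i
      · rw [if_pos hmi, blk_G]
        by_cases hmk : m ≤ k
        · have hmemk : blk (Trow hn X m) m k ∈ Vb m k := by
            rw [blk_Trow hn X hmk]
            exact Submodule.smul_mem _ _ ((IH m hmi).2.1 m k hmk)
          rcases lt_or_eq_of_le hkl with hkl' | rfl
          · have hmeml : blk (Trow hn X m) m l ∈ Vb m l := by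
              rw [blk_Trow hn X (hmk.trans hkl)]
              exact Submodule.smul_mem _ _ ((IH m hmi).2.1 m l (hmk.trans hkl))
            exact ax2 m k l hmk hkl' _ hmemk _ hmeml
          · obtain ⟨c, hcc⟩ := ax3 m k hmk _ hmemk
            rw [hcc]
            exact (mem_Vbdiag_iff hdiag k _).mpr ⟨c, rfl⟩
        · rw [blk_Trow_lower hn X hmk, Matrix.transpose_zero, Matrix.zero_mul]
          exact Submodule.zero_mem _
      · rw [if_neg hmi]; exact Submodule.zero_mem _
    -- (e) the diagonal block is scalar
    have he : blk (Rmat hn X i) i i = dval hn X i • 1 := by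
      obtain ⟨c, hcc⟩ := (mem_Vbdiag_iff hdiag i _).mp (hb i i le_rfl)
      have hd : dval hn X i = c := by
        have h0 := congrFun (congrFun hcc ⟨0, hn i⟩) ⟨0, hn i⟩
        rw [blk_apply] at h0
        unfold dval
        rw [h0, Matrix.smul_apply, Matrix.one_apply_eq]
        simp
      rw [hcc, hd]
    -- (d) positive definiteness on the tail
    have hpd : ∀ v : BIx n → ℝ, v ≠ 0 → (∀ p : BIx n, p.1 < i → v p = 0) →
        0 < v ⬝ᵥ Rmat hn X i *ᵥ v := by
      intro v hv hsupp
      by_cases hi0 : i.1 = 0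
      · rw [Rmat_base hn X hi0]
        have := hX.1.dotProduct_mulVec_pos hv; rwa [star_trivial] at this
      · have hipos : 0 < i.1 := Nat.pos_of_ne_zero hi0
        have hkr : i.1 - 1 < r := lt_trans (by omega) i.2
        set k : Fin r := ⟨i.1 - 1, hkr⟩ with hkdef
        have hk1 : k.1 + 1 = i.1 := by simp [hkdef]; omega
        have hki : k < i := by rw [Fin.lt_def]; omega
        obtain ⟨hkc, hkb, hke, hka, hkpd⟩ := IH k hki
        have hRt : (Rmat hn X k)ᵀ = Rmat hn X k := Rmat_transpose hn hX.2.1 k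
        have hd0 : dval hn X k ≠ 0 := ne_of_gt hka
        set u : BIx n → ℝ := fun p => if p.1 = k then (Rmat hn X k *ᵥ v) p else 0 with hudef
        have hsuppk : ∀ q : BIx n, q.1 < k → v q = 0 := fun q hq => hsupp q (lt_trans hq hki)
        have hsuppk' : ∀ q : BIx n, ¬ k ≤ q.1 → v q = 0 := fun q hq =>
          hsupp q (lt_of_lt_of_le (not_le.mp hq) hki.le)
        -- Step A : Trow k applied to v
        have hA : Trow hn X k *ᵥ v = (Real.sqrt (dval hn X k))⁻¹ • u := by
          funext p
          by_cases hp : p.1 = k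
          · have hup : u p = (Rmat hn X k *ᵥ v) p := if_pos hp
            show (Trow hn X k *ᵥ v) p = (Real.sqrt (dval hn X k))⁻¹ * u p
            rw [hup, mulVec_apply', mulVec_apply', Finset.mul_sum]
            refine Finset.sum_congr rfl fun q _ => ?_
            by_cases hq : k ≤ q.1
            · rw [Trow_apply hn X k hp hq, mul_assoc]
            · rw [Trow_apply_zero hn X k (fun hcnd => hq hcnd.2), hsuppk' q hq]
              ring
          · have hup : u p = 0 := if_neg hp
            show (Trow hn X k *ᵥ v) p = (Real.sqrt (dval hn X k))⁻¹ * u p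
            rw [hup, mul_zero, mulVec_apply']
            exact Finset.sum_eq_zero fun q _ => by
              rw [Trow_apply_zero hn X k (fun hcnd => hp hcnd.1), zero_mul]
        -- Step B : the Gram term
        have hGv : v ⬝ᵥ ((Trow hn X k)ᵀ * Trow hn X k) *ᵥ v
            = (dval hn X k)⁻¹ * (u ⬝ᵥ u) := by
          rw [← Matrix.mulVec_mulVec, Matrix.dotProduct_mulVec, Matrix.vecMul_transpose, hA]
          rw [smul_dotProduct, dotProduct_smul, smul_eq_mul, smul_eq_mul, ← mul_assoc,
            ← mul_inv, Real.mul_self_sqrt hka.le]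
        -- Step C
        have hCu : u ⬝ᵥ (Rmat hn X k *ᵥ v) = u ⬝ᵥ u := by
          rw [dotProduct_apply', dotProduct_apply']
          refine Finset.sum_congr rfl fun p _ => ?_
          by_cases hp : p.1 = k
          · have : u p = (Rmat hn X k *ᵥ v) p := if_pos hp
            rw [this]
          · have : u p = 0 := if_neg hp
            rw [this, zero_mul, zero_mul]
        -- Step D
        have hD : v ⬝ᵥ (Rmat hn X k *ᵥ u) = u ⬝ᵥ u := by
          rw [Matrix.dotProduct_mulVec]
          rw [show v ᵥ* Rmat hn X k = Rmat hn X k *ᵥ v by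
            conv_lhs => rw [← hRt]
            rw [Matrix.vecMul_transpose]]
          rw [dotProduct_comm]
          exact hCu
        -- Step E
        have hRu : ∀ p : BIx n, p.1 = k → (Rmat hn X k *ᵥ u) p = dval hn X k * u p := by
          rintro ⟨pk, a⟩ hp
          dsimp only at hp
          subst hp
          rw [mulVec_apply', ← Finset.univ_sigma_univ, Finset.sum_sigma]
          rw [Finset.sum_eq_single k]
          · have hterm : ∀ c : Fin (n k),
                Rmat hn X k ⟨k, a⟩ ⟨k, c⟩ * u ⟨k, c⟩
                = if c = a then dval hn X k * u ⟨k, c⟩ else 0 := by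
              intro c
              rw [Rmat_entry_diag hn hke a c]
              by_cases hac : a = c
              · subst hac; simp
              · rw [if_neg hac, if_neg (fun h => hac (h.symm)), zero_mul]
            rw [Finset.sum_congr rfl fun c _ => hterm c, Finset.sum_ite_eq'
              Finset.univ a _, if_pos (Finset.mem_univ a)]
          · intro b _ hbk
            refine Finset.sum_eq_zero fun c _ => ?_
            have : u ⟨b, c⟩ = 0 := if_neg (by exact hbk)
            rw [this, mul_zero]
          · intro h; exact absurd (Finset.mem_univ _) h
        have hE : u ⬝ᵥ (Rmat hn X k *ᵥ u) = dval hn X k * (u ⬝ᵥ u) := by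
          rw [dotProduct_apply', dotProduct_apply', Finset.mul_sum]
          refine Finset.sum_congr rfl fun p _ => ?_
          by_cases hp : p.1 = k
          · rw [hRu p hp]; ring
          · have : u p = 0 := if_neg hp
            rw [this, zero_mul, zero_mul, mul_zero]
        -- the shifted vector
        set w : BIx n → ℝ := v - (dval hn X k)⁻¹ • u with hwdef
        have hww : w ⬝ᵥ (Rmat hn X k *ᵥ w)
            = v ⬝ᵥ (Rmat hn X k *ᵥ v) - (dval hn X k)⁻¹ * (u ⬝ᵥ u) := by
          rw [hwdef, Matrix.mulVec_sub, Matrix.mulVec_smul]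
          simp only [sub_dotProduct, dotProduct_sub, smul_dotProduct, dotProduct_smul,
            smul_eq_mul]
          rw [hD, hCu, hE]
          field_simp
          ring
        have hw0 : w ≠ 0 := by
          obtain ⟨p, hp⟩ : ∃ p, v p ≠ 0 := Function.ne_iff.mp hv
          have hpk : ¬ p.1 < i := fun hcon => hp (hsupp p hcon)
          have hpne : p.1 ≠ k := by
            intro hh
            exact hpk (hh ▸ hki)
          have hup : u p = 0 := if_neg hpne
          intro hcon
          have := congrFun hcon p
          rw [hwdef] at this
          simp only [Pi.sub_apply, Pi.smul_apply, hup, smul_eq_mul, mul_zero, sub_zero,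
            Pi.zero_apply] at this
          exact hp this
        have hwsupp : ∀ p : BIx n, p.1 < k → w p = 0 := by
          intro p hp
          have h1 : v p = 0 := hsuppk p hp
          have h2 : u p = 0 := if_neg (ne_of_lt hp)
          rw [hwdef]
          simp [h1, h2]
        have hfin := hkpd w hw0 hwsupp
        rw [hww] at hfin
        rw [Rmat_succ hn X hk1, Matrix.sub_mulVec, dotProduct_sub, hGv]
        exact hfin
    -- (a) positivity of the pivot
    have ha : 0 < dval hn X i := by
      set p0 : BIx n := ⟨i, ⟨0, hn i⟩⟩ with hp0
      set e : BIx n → ℝ := fun p => if p = p0 then 1 else 0 with hedef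
      have he0 : e ≠ 0 := by
        intro h
        have := congrFun h p0
        simp [hedef] at this
      have hsupp : ∀ p : BIx n, p.1 < i → e p = 0 := by
        intro p hp
        have hne : p ≠ p0 := by
          intro hh
          rw [hh, hp0] at hp
          exact lt_irrefl _ hp
        simp [hedef, hne]
      have hval := hpd e he0 hsupp
      have hRe : Rmat hn X i *ᵥ e = fun p => Rmat hn X i p p0 := by
        funext p
        rw [mulVec_apply']
        rw [Finset.sum_eq_single p0]
        · simp [hedef]
        · intro q _ hq
          simp [hedef, hq]
        · intro h; exact absurd (Finset.mem_univ _) h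
      rw [hRe] at hval
      have : e ⬝ᵥ (fun p => Rmat hn X i p p0) = Rmat hn X i p0 p0 := by
        rw [dotProduct_apply']
        rw [Finset.sum_eq_single p0]
        · simp [hedef]
        · intro q _ hq
          simp [hedef, hq]
        · intro h; exact absurd (Finset.mem_univ _) h
      rw [this] at hval
      exact hval
    exact ⟨hc, hb, he, ha, hpd⟩
  exact fun i => main i.1 i rfl

end Chol4
section Chol5

variable {n : Fin r → ℕ}
variable {Vb : ∀ i j : Fin r, Submodule ℝ (Matrix (Fin (n i)) (Fin (n j)) ℝ)}

lemma G_cross (hn : ∀ i, 0 < n i) (X : Matrix (BIx n) (BIx n) ℝ) {m m' : Fin r}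
    (h : m ≠ m') : (Trow hn X m)ᵀ * Trow hn X m' = 0 := by
  ext p q
  rw [Matrix.mul_apply]
  refine Finset.sum_eq_zero fun s _ => ?_
  rw [Matrix.transpose_apply]
  by_cases hs : s.1 = m
  · rw [Trow_apply_zero hn X m' (fun hc => h (hs.symm.trans hc.1)), mul_zero]
  · rw [Trow_apply_zero hn X m (fun hc => hs hc.1), zero_mul]

/-- Existence of the Cholesky factorization inside `𝕋₊₊`. -/
lemma chol_factor (hn : ∀ i, 0 < n i)
    (hdiag : ∀ i : Fin r, Vb i i
      = Submodule.span ℝ {(1 : Matrix (Fin (n i)) (Fin (n i)) ℝ)})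
    (ax2 : ∀ i j k : Fin r, i ≤ j → j < k → ∀ A ∈ Vb i j, ∀ B ∈ Vb i k, Aᵀ * B ∈ Vb j k)
    (ax3 : ∀ i j : Fin r, i ≤ j → ∀ A ∈ Vb i j,
        ∃ c : ℝ, Aᵀ * A = c • (1 : Matrix (Fin (n j)) (Fin (n j)) ℝ))
    {X : Matrix (BIx n) (BIx n) ℝ} (hX : X ∈ Kcone n Vb) :
    ∃ T ∈ TTpp n Vb, Tᵀ * T = X := by
  have hP := chol_main hn hdiag ax2 ax3 hX
  refine ⟨∑ m : Fin r, Trow hn X m, ?_, ?_⟩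
  · have hblk : ∀ i j : Fin r, blk (∑ m : Fin r, Trow hn X m) i j
        = blk (Trow hn X i) i j := by
      intro i j
      rw [blk_sum, Finset.sum_eq_single i]
      · intro m _ hm
        exact blk_Trow_ne hn X (Ne.symm hm)
      · intro h; exact absurd (Finset.mem_univ _) h
    refine ⟨fun i j hji => ?_, fun i => ?_, fun i j hij => ?_⟩
    · rw [hblk, blk_Trow_lower hn X (not_le.mpr hji)]
    · refine ⟨Real.sqrt (dval hn X i), Real.sqrt_pos.mpr (hP i).2.2.2.1, ?_⟩
      rw [hblk, blk_Trow hn X le_rfl, (hP i).2.2.1, smul_smul]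
      congr 1
      have hd := (hP i).2.2.2.1
      have hs : Real.sqrt (dval hn X i) ≠ 0 := ne_of_gt (Real.sqrt_pos.mpr hd)
      rw [inv_mul_eq_div, div_eq_iff hs]
      exact (Real.mul_self_sqrt hd.le).symm
    · rw [hblk, blk_Trow hn X hij.le]
      exact Submodule.smul_mem _ _ ((hP i).2.1 i j hij.le)
  · have hTT : (∑ m : Fin r, Trow hn X m)ᵀ * (∑ m : Fin r, Trow hn X m)
        = ∑ m : Fin r, (Trow hn X m)ᵀ * Trow hn X m := by
      rw [Matrix.transpose_sum, Finset.sum_mul]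
      refine Finset.sum_congr rfl fun m _ => ?_
      rw [Matrix.mul_sum, Finset.sum_eq_single m]
      · intro m' _ hm'
        exact G_cross hn X (Ne.symm hm')
      · intro h; exact absurd (Finset.mem_univ _) h
    rw [hTT]
    ext p q
    rw [Matrix.sum_apply]
    have hpt : ∀ m : Fin r, ((Trow hn X m)ᵀ * Trow hn X m) p q
        = (if m < p.1 then ((Trow hn X m)ᵀ * Trow hn X m) p q else 0)
          + (if m = p.1 then ((Trow hn X m)ᵀ * Trow hn X m) p q else 0) := by
      intro m
      rcases lt_trichotomy m p.1 with h | h | h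
      · rw [if_pos h, if_neg (ne_of_lt h), add_zero]
      · rw [if_neg (by rw [h]; exact lt_irrefl _), if_pos h, zero_add]
      · rw [if_neg (not_lt.mpr h.le), if_neg (ne_of_gt h), add_zero,
          G_apply_zero_left hn X h]
    rw [Finset.sum_congr rfl fun m _ => hpt m, Finset.sum_add_distrib]
    have h1 : ∑ m : Fin r, (if m < p.1 then ((Trow hn X m)ᵀ * Trow hn X m) p q else 0)
        = X p q - Rmat hn X p.1 p q := by
      have hR := congrFun (congrFun (show Rmat hn X p.1
          = X - ∑ m : Fin r, if m < p.1 then (Trow hn X m)ᵀ * Trow hn X m else 0 from rfl) p) q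
      rw [Matrix.sub_apply, Matrix.sum_apply] at hR
      have hite : ∀ m : Fin r,
          (if m < p.1 then (Trow hn X m)ᵀ * Trow hn X m else 0) p q
          = if m < p.1 then ((Trow hn X m)ᵀ * Trow hn X m) p q else 0 := by
        intro m; split_ifs <;> rfl
      rw [Finset.sum_congr rfl fun m _ => hite m] at hR
      rw [hR]
      ring
    have h2 : ∑ m : Fin r, (if m = p.1 then ((Trow hn X m)ᵀ * Trow hn X m) p q else 0)
        = Rmat hn X p.1 p q := by
      rw [Finset.sum_ite_eq' Finset.univ p.1 _, if_pos (Finset.mem_univ _)]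
      exact GR_row hn hX.2.1 (hP p.1) p q rfl
    rw [h1, h2]
    ring

end Chol5
section Uniq

variable {n : Fin r → ℕ}
variable {Vb : ∀ i j : Fin r, Submodule ℝ (Matrix (Fin (n i)) (Fin (n j)) ℝ)}

/-- Uniqueness of the Cholesky factorization among upper triangular matrices with
positive diagonal. -/
lemma cholesky_unique {A B : Matrix (BIx n) (BIx n) ℝ}
    (hA1 : ∀ p q : BIx n, wt n q < wt n p → A p q = 0) (hA2 : ∀ p, 0 < A p p)
    (hB1 : ∀ p q : BIx n, wt n q < wt n p → B p q = 0) (hB2 : ∀ p, 0 < B p p)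
    (h : Aᵀ * A = Bᵀ * B) : A = B := by
  have hAB : ∀ p q : BIx n, ∑ s, A s p * A s q = ∑ s, B s p * B s q := by
    intro p q
    have := congrFun (congrFun h p) q
    rw [Matrix.mul_apply, Matrix.mul_apply] at this
    simpa [Matrix.transpose_apply] using this
  have main : ∀ N : ℕ, ∀ p : BIx n, wt n p = N → ∀ q, A p q = B p q := by
    intro N
    induction N using Nat.strong_induction_on with
    | _ N IHN =>
    intro p hp
    have hrow : ∀ s : BIx n, wt n s < wt n p → ∀ q, A s q = B s q := fun s hs q =>
      IHN (wt n s) (hp ▸ hs) s rfl q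
    have hother : ∀ q : BIx n, ∀ s ∈ Finset.univ.erase p, A s p * A s q = B s p * B s q := by
      intro q s hs
      have hsp : s ≠ p := Finset.ne_of_mem_erase hs
      rcases lt_trichotomy (wt n s) (wt n p) with hlt | heq | hgt
      · rw [hrow s hlt p, hrow s hlt q]
      · exact absurd (wt_injective heq) hsp
      · rw [hA1 s p hgt, hB1 s p hgt, zero_mul, zero_mul]
    have hsplit : ∀ q : BIx n, A p p * A p q = B p p * B p q := by
      intro q
      have h1 := hAB p q
      rw [← Finset.add_sum_erase _ _ (Finset.mem_univ p),
        ← Finset.add_sum_erase _ (fun s => B s p * B s q) (Finset.mem_univ p)] at h1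
      rw [Finset.sum_congr rfl (hother q)] at h1
      exact add_right_cancel h1
    have hdg : A p p = B p p := by
      have h1 := hsplit p
      have h2 : (A p p - B p p) * (A p p + B p p) = 0 := by ring_nf; linarith [h1]
      rcases mul_eq_zero.mp h2 with h3 | h3
      · linarith
      · nlinarith [hA2 p, hB2 p]
    intro q
    have h1 := hsplit q
    rw [hdg] at h1
    exact mul_left_cancel₀ (ne_of_gt (hB2 p)) h1
  ext p q
  exact main (wt n p) p rfl q

/-- Simple transitivity: existence and uniqueness of the transporting element. -/
lemma simply_transitive (hn : ∀ i, 0 < n i)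
    (hdiag : ∀ i : Fin r, Vb i i
      = Submodule.span ℝ {(1 : Matrix (Fin (n i)) (Fin (n i)) ℝ)})
    (ax1 : ∀ i j k : Fin r, i ≤ j → j ≤ k → ∀ A ∈ Vb i j, ∀ B ∈ Vb j k, A * B ∈ Vb i k)
    (ax2 : ∀ i j k : Fin r, i ≤ j → j < k → ∀ A ∈ Vb i j, ∀ B ∈ Vb i k, Aᵀ * B ∈ Vb j k)
    (ax3 : ∀ i j : Fin r, i ≤ j → ∀ A ∈ Vb i j,
        ∃ c : ℝ, Aᵀ * A = c • (1 : Matrix (Fin (n j)) (Fin (n j)) ℝ))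
    {X Y : Matrix (BIx n) (BIx n) ℝ} (hX : X ∈ Kcone n Vb) (hY : Y ∈ Kcone n Vb) :
    ∃! T, T ∈ TTpp n Vb ∧ Tᵀ * X * T = Y := by
  obtain ⟨A, hA, hAX⟩ := chol_factor hn hdiag ax2 ax3 hX
  obtain ⟨B, hB, hBY⟩ := chol_factor hn hdiag ax2 ax3 hY
  have hAinv : A⁻¹ ∈ TTpp n Vb := TTpp_inv_mem hdiag ax1 hA
  have key : ∀ S : Matrix (BIx n) (BIx n) ℝ, (A * S)ᵀ * (A * S) = Sᵀ * (Aᵀ * A) * S := by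
    intro S
    rw [Matrix.transpose_mul]
    simp only [Matrix.mul_assoc]
  have hAB : A * (A⁻¹ * B) = B := by
    rw [← Matrix.mul_assoc, TTpp_mul_inv hA, Matrix.one_mul]
  refine ⟨A⁻¹ * B, ⟨TTpp_mul_mem hdiag ax1 hAinv hB, ?_⟩, ?_⟩
  · rw [← hAX, ← hBY, ← key, hAB]
  · rintro S ⟨hS, hSY⟩
    have hC : A * S ∈ TTpp n Vb := TTpp_mul_mem hdiag ax1 hA hS
    have hCC : (A * S)ᵀ * (A * S) = Bᵀ * B := by
      rw [key, hAX, hSY, hBY]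
    have hASB : A * S = B :=
      cholesky_unique (fun p q hpq => TTpp_entry_zero hC hpq) (TTpp_diag_pos hC)
        (fun p q hpq => TTpp_entry_zero hB hpq) (TTpp_diag_pos hB) hCC
    calc S = A⁻¹ * (A * S) := by rw [← Matrix.mul_assoc, TTpp_inv_mul hA, Matrix.one_mul]
      _ = A⁻¹ * B := by rw [hASB]

end Uniq
section Reverse

variable {n : Fin r → ℕ}
variable {Vb : ∀ i j : Fin r, Submodule ℝ (Matrix (Fin (n i)) (Fin (n j)) ℝ)}

lemma one_mem_Vset
    (hdiag : ∀ i : Fin r, Vb i i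
      = Submodule.span ℝ {(1 : Matrix (Fin (n i)) (Fin (n i)) ℝ)}) :
    (1 : Matrix (BIx n) (BIx n) ℝ) ∈ Vset n Vb := by
  refine ⟨Matrix.transpose_one, fun i j hij => ?_⟩
  rcases eq_or_lt_of_le hij with rfl | hlt
  · rw [blk_one_diag]
    exact (mem_Vbdiag_iff hdiag i _).mpr ⟨1, (one_smul _ _).symm⟩
  · rw [blk_one_offdiag (ne_of_lt hlt)]
    exact Submodule.zero_mem _

lemma blk_oneadd_same {i j : Fin r} (hij : i ≠ j) (A : Matrix (Fin (n i)) (Fin (n j)) ℝ) :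
    blk (1 + emb n i j A) i j = A := by
  rw [blk_add, blk_one_offdiag hij, blk_emb_same, zero_add]

lemma blk_oneadd_diag {i j : Fin r} (hij : i ≠ j) (A : Matrix (Fin (n i)) (Fin (n j)) ℝ)
    (m : Fin r) : blk (1 + emb n i j A) m m = 1 := by
  rw [blk_add, blk_one_diag, blk_emb_ne _ _ _ _ _ (fun hc => hij (hc.1.symm.trans hc.2)),
    add_zero]

lemma blk_oneadd_ne {i j k l : Fin r} (A : Matrix (Fin (n i)) (Fin (n j)) ℝ)
    (hkl : k ≠ l) (hne : ¬(k = i ∧ l = j)) : blk (1 + emb n i j A) k l = 0 := by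
  rw [blk_add, blk_one_offdiag hkl, blk_emb_ne _ _ _ _ _ hne, add_zero]

lemma TTpp_one_add_emb {i j : Fin r} (hij : i < j) {A : Matrix (Fin (n i)) (Fin (n j)) ℝ}
    (hA : A ∈ Vb i j) : 1 + emb n i j A ∈ TTpp n Vb := by
  refine ⟨fun k l hlk => ?_, fun m => ⟨1, one_pos, ?_⟩, fun k l hkl => ?_⟩
  · refine blk_oneadd_ne A (ne_of_gt hlk) ?_
    rintro ⟨rfl, rfl⟩
    exact absurd hij (not_lt.mpr hlk.le)
  · rw [blk_oneadd_diag (ne_of_lt hij), one_smul]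
  · by_cases hc : k = i ∧ l = j
    · obtain ⟨rfl, rfl⟩ := hc
      rw [blk_oneadd_same (ne_of_lt hij)]
      exact hA
    · rw [blk_oneadd_ne A (ne_of_lt hkl) hc]
      exact Submodule.zero_mem _

/-- Axiom [V3] follows from invariance of `V`. -/
lemma derive_ax3
    (hdiag : ∀ i : Fin r, Vb i i
      = Submodule.span ℝ {(1 : Matrix (Fin (n i)) (Fin (n i)) ℝ)})
    (hmap : ∀ T ∈ TTpp n Vb, ∀ X ∈ Vset n Vb, Tᵀ * X * T ∈ Vset n Vb) :
    ∀ i j : Fin r, i ≤ j → ∀ A ∈ Vb i j,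
      ∃ c : ℝ, Aᵀ * A = c • (1 : Matrix (Fin (n j)) (Fin (n j)) ℝ) := by
  intro i j hij A hA
  rcases eq_or_lt_of_le hij with rfl | hlt
  · obtain ⟨c, hc⟩ := (mem_Vbdiag_iff hdiag i A).mp hA
    refine ⟨c * c, ?_⟩
    rw [hc, Matrix.transpose_smul, Matrix.transpose_one, Matrix.smul_mul, Matrix.mul_smul,
      Matrix.mul_one, smul_smul]
  · set T := 1 + emb n i j A with hTdef
    have hT : T ∈ TTpp n Vb := TTpp_one_add_emb hlt hA
    have hmem := hmap T hT 1 (one_mem_Vset hdiag)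
    rw [Matrix.mul_one] at hmem
    have hblk : blk (Tᵀ * T) j j = Aᵀ * A + 1 := by
      rw [blk_mul]
      have hterm : ∀ k : Fin r, blk Tᵀ j k * blk T k j
          = (blk T k j)ᵀ * blk T k j := fun k => by rw [blk_transpose]
      rw [Finset.sum_congr rfl fun k _ => hterm k]
      have hsub : ({i, j} : Finset (Fin r)) ⊆ Finset.univ := Finset.subset_univ _
      have hzero : ∀ k ∈ Finset.univ, k ∉ ({i, j} : Finset (Fin r)) →
          (blk T k j)ᵀ * blk T k j = 0 := by
        intro k _ hk
        simp only [Finset.mem_insert, Finset.mem_singleton, not_or] at hk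
        rw [blk_oneadd_ne A hk.2 (fun hc => hk.1 hc.1), Matrix.transpose_zero,
          Matrix.zero_mul]
      rw [← Finset.sum_subset hsub hzero, Finset.sum_pair (ne_of_lt hlt)]
      rw [blk_oneadd_same (ne_of_lt hlt), blk_oneadd_diag (ne_of_lt hlt),
        Matrix.transpose_one, Matrix.one_mul]
    obtain ⟨c, hc⟩ := (mem_Vbdiag_iff hdiag j _).mp (hmem.2 j j le_rfl)
    rw [hblk] at hc
    refine ⟨c - 1, ?_⟩
    rw [sub_smul, one_smul, ← hc]
    abel

/-- Axiom [V2] follows from invariance of `V`. -/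
lemma derive_ax2
    (hdiag : ∀ i : Fin r, Vb i i
      = Submodule.span ℝ {(1 : Matrix (Fin (n i)) (Fin (n i)) ℝ)})
    (hmap : ∀ T ∈ TTpp n Vb, ∀ X ∈ Vset n Vb, Tᵀ * X * T ∈ Vset n Vb) :
    ∀ i j k : Fin r, i ≤ j → j < k → ∀ A ∈ Vb i j, ∀ B ∈ Vb i k, Aᵀ * B ∈ Vb j k := by
  intro i j k hij hjk A hA B hB
  rcases eq_or_lt_of_le hij with rfl | hlt
  · obtain ⟨a, ha⟩ := (mem_Vbdiag_iff hdiag i A).mp hA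
    rw [ha, Matrix.transpose_smul, Matrix.transpose_one, Matrix.smul_mul, Matrix.one_mul]
    exact Submodule.smul_mem _ _ hB
  · set T := 1 + emb n i j A + emb n i k B with hTdef
    have hik : i < k := lt_trans hlt hjk
    have hblkT : ∀ s t : Fin r, s ≠ t → ¬(s = i ∧ t = j) → ¬(s = i ∧ t = k) →
        blk T s t = 0 := by
      intro s t h1 h2 h3
      rw [blk_add, blk_oneadd_ne A h1 h2, blk_emb_ne _ _ _ _ _ h3, add_zero]
    have hblkdiag : ∀ m : Fin r, blk T m m = 1 := by
      intro m
      rw [blk_add, blk_oneadd_diag (ne_of_lt hlt),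
        blk_emb_ne _ _ _ _ _ (fun hc => (ne_of_lt hik) (hc.1.symm.trans hc.2)), add_zero]
    have hblkij : blk T i j = A := by
      rw [blk_add, blk_oneadd_same (ne_of_lt hlt),
        blk_emb_ne _ _ _ _ _ (fun hc => (ne_of_lt hjk) hc.2), add_zero]
    have hblkik : blk T i k = B := by
      rw [blk_add, blk_oneadd_ne A (ne_of_lt hik) (fun hc => (ne_of_lt hjk) hc.2.symm),
        blk_emb_same, zero_add]
    have hT : T ∈ TTpp n Vb := by
      refine ⟨fun s t hts => ?_, fun m => ⟨1, one_pos, by rw [hblkdiag m, one_smul]⟩,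
        fun s t hst => ?_⟩
      · refine hblkT s t (ne_of_gt hts) ?_ ?_
        · rintro ⟨rfl, rfl⟩
          exact absurd hlt (not_lt.mpr hts.le)
        · rintro ⟨rfl, rfl⟩
          exact absurd hik (not_lt.mpr hts.le)
      · by_cases h1 : s = i ∧ t = j
        · obtain ⟨rfl, rfl⟩ := h1
          rw [hblkij]; exact hA
        · by_cases h2 : s = i ∧ t = k
          · obtain ⟨rfl, rfl⟩ := h2
            rw [hblkik]; exact hB
          · rw [hblkT s t (ne_of_lt hst) h1 h2]
            exact Submodule.zero_mem _
    have hmem := hmap T hT 1 (one_mem_Vset hdiag)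
    rw [Matrix.mul_one] at hmem
    have hblk : blk (Tᵀ * T) j k = Aᵀ * B := by
      rw [blk_mul]
      have hterm : ∀ m : Fin r, blk Tᵀ j m * blk T m k
          = (blk T m j)ᵀ * blk T m k := fun m => by rw [blk_transpose]
      rw [Finset.sum_congr rfl fun m _ => hterm m]
      rw [Finset.sum_eq_single i]
      · rw [hblkij, hblkik]
      · intro m _ hmi
        by_cases hmj : m = j
        · subst hmj
          rw [hblkT m k (ne_of_lt hjk) (fun hc => (ne_of_lt hlt) hc.1.symm)
            (fun hc => hmi hc.1), Matrix.mul_zero]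
        · rw [hblkT m j hmj (fun hc => hmi hc.1) (fun hc => (ne_of_lt hjk) hc.2),
            Matrix.transpose_zero, Matrix.zero_mul]
      · intro h; exact absurd (Finset.mem_univ _) h
    rw [← hblk]
    exact hmem.2 j k hjk.le

/-- Axiom [V1] follows from invariance of `V`. -/
lemma derive_ax1
    (hdiag : ∀ i : Fin r, Vb i i
      = Submodule.span ℝ {(1 : Matrix (Fin (n i)) (Fin (n i)) ℝ)})
    (hmap : ∀ T ∈ TTpp n Vb, ∀ X ∈ Vset n Vb, Tᵀ * X * T ∈ Vset n Vb) :
    ∀ i j k : Fin r, i ≤ j → j ≤ k → ∀ A ∈ Vb i j, ∀ B ∈ Vb j k, A * B ∈ Vb i k := by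
  intro i j k hij hjk A hA B hB
  rcases eq_or_lt_of_le hij with rfl | hlt
  · obtain ⟨a, ha⟩ := (mem_Vbdiag_iff hdiag i A).mp hA
    rw [ha, Matrix.smul_mul, Matrix.one_mul]
    exact Submodule.smul_mem _ _ hB
  rcases eq_or_lt_of_le hjk with rfl | hlt2
  · obtain ⟨b, hb⟩ := (mem_Vbdiag_iff hdiag j B).mp hB
    rw [hb, Matrix.mul_smul, Matrix.mul_one]
    exact Submodule.smul_mem _ _ hA
  have hik : i < k := lt_trans hlt hlt2
  set T := 1 + emb n j k B with hTdef
  set X := emb n i j A + emb n j i Aᵀ with hXdef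
  have hT : T ∈ TTpp n Vb := TTpp_one_add_emb hlt2 hB
  have hX : X ∈ Vset n Vb := by
    constructor
    · show Xᵀ = X
      rw [hXdef, Matrix.transpose_add, emb_transpose, emb_transpose,
        Matrix.transpose_transpose, add_comm]
    · intro s t hst
      rw [hXdef, blk_add]
      by_cases h1 : s = i ∧ t = j
      · obtain ⟨rfl, rfl⟩ := h1
        rw [blk_emb_same, blk_emb_ne _ _ _ _ _ (fun hc => (ne_of_lt hlt) hc.1), add_zero]
        exact hA
      · have h2 : ¬(s = j ∧ t = i) := by
          rintro ⟨rfl, rfl⟩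
          exact absurd hst (not_le.mpr hlt)
        rw [blk_emb_ne _ _ _ _ _ h1, blk_emb_ne _ _ _ _ _ h2, add_zero]
        exact Submodule.zero_mem _
  have hmem := hmap T hT X hX
  have hTmi : ∀ m : Fin r, m ≠ i → blk T m i = 0 := by
    intro m hm
    exact blk_oneadd_ne B hm (fun hc => (ne_of_lt hik) hc.2)
  have hTii : blk T i i = 1 := blk_oneadd_diag (ne_of_lt hlt2) B i
  have hXil : ∀ l : Fin r, l ≠ j → blk X i l = 0 := by
    intro l hl
    rw [hXdef, blk_add, blk_emb_ne _ _ _ _ _ (fun hc => hl hc.2),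
      blk_emb_ne _ _ _ _ _ (fun hc => (ne_of_lt hlt) hc.1), add_zero]
  have hXij : blk X i j = A := by
    rw [hXdef, blk_add, blk_emb_same,
      blk_emb_ne _ _ _ _ _ (fun hc => (ne_of_lt hlt) hc.1), add_zero]
  have hTjk : blk T j k = B := blk_oneadd_same (ne_of_lt hlt2) B
  have hTlk : ∀ l : Fin r, l ≠ j → l ≠ k → blk T l k = 0 := fun l h1 h2 =>
    blk_oneadd_ne B h2 (fun hc => h1 hc.1)
  have hblk : blk (Tᵀ * X * T) i k = A * B := by
    rw [blk_conj]
    rw [Finset.sum_eq_single j]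
    · rw [Finset.sum_eq_single i]
      · rw [hTii, Matrix.transpose_one, Matrix.one_mul, hXij, hTjk]
      · intro m _ hm
        rw [hTmi m hm, Matrix.transpose_zero, Matrix.zero_mul, Matrix.zero_mul]
      · intro h; exact absurd (Finset.mem_univ _) h
    · intro l _ hl
      refine Finset.sum_eq_zero fun m _ => ?_
      by_cases hm : m = i
      · subst hm
        by_cases hlk : l = k
        · subst hlk
          rw [hXil l (ne_of_gt hlt2), Matrix.mul_zero, Matrix.zero_mul]
        · rw [hTlk l hl hlk, Matrix.mul_zero]
      · rw [hTmi m hm, Matrix.transpose_zero, Matrix.zero_mul, Matrix.zero_mul]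
    · intro h; exact absurd (Finset.mem_univ _) h
  rw [← hblk]
  exact hmem.2 i k hik.le

end Reverse

/-- **Equivalence of the Ishi axioms with simple transitivity.**
The subspaces `Vb i j` satisfy the three Ishi axioms [V1], [V2], [V3] if and only if:
for every `T ∈ 𝕋₊₊` the map `𝒯_T : X ↦ Tᵀ·X·T` maps `V` into `V` and restricts to a bijection
of `K = S^n_{++} ∩ V` onto itself; the set of these restricted maps is a group under
composition (closed under composition and inversion, with `T = I` giving the identity);
and this group acts simply transitively on `K`. -/
theorem ishi_axioms_iff_simply_transitive (r : ℕ) (hr : 1 ≤ r)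
    (n : Fin r → ℕ) (hn : ∀ i, 0 < n i)
    (Vb : ∀ i j : Fin r, Submodule ℝ (Matrix (Fin (n i)) (Fin (n j)) ℝ))
    (hdiag : ∀ i : Fin r, Vb i i = Submodule.span ℝ {(1 : Matrix (Fin (n i)) (Fin (n i)) ℝ)}) :
    ((∀ i j k : Fin r, i ≤ j → j ≤ k → ∀ A ∈ Vb i j, ∀ B ∈ Vb j k, A * B ∈ Vb i k) ∧
     (∀ i j k : Fin r, i ≤ j → j < k → ∀ A ∈ Vb i j, ∀ B ∈ Vb i k, Aᵀ * B ∈ Vb j k) ∧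
     (∀ i j : Fin r, i ≤ j → ∀ A ∈ Vb i j,
        ∃ c : ℝ, Aᵀ * A = c • (1 : Matrix (Fin (n j)) (Fin (n j)) ℝ)))
    ↔
    ((∀ T ∈ TTpp n Vb, ∀ X ∈ Vset n Vb, Tᵀ * X * T ∈ Vset n Vb) ∧
     (∀ T ∈ TTpp n Vb, Set.BijOn (fun X => Tᵀ * X * T) (Kcone n Vb) (Kcone n Vb)) ∧
     (∀ T ∈ TTpp n Vb, ∀ U ∈ TTpp n Vb, ∃ W ∈ TTpp n Vb,
        ∀ X ∈ Vset n Vb, Tᵀ * (Uᵀ * X * U) * T = Wᵀ * X * W) ∧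
     (∀ T ∈ TTpp n Vb, ∃ U ∈ TTpp n Vb,
        ∀ X ∈ Vset n Vb, Uᵀ * (Tᵀ * X * T) * U = X ∧ Tᵀ * (Uᵀ * X * U) * T = X) ∧
     (∀ X ∈ Kcone n Vb, ∀ Y ∈ Kcone n Vb, ∃! T, T ∈ TTpp n Vb ∧ Tᵀ * X * T = Y)) := by
  constructor
  · rintro ⟨ax1, ax2, ax3⟩
    refine ⟨fun T hT X hX => conj_mem_Vset hdiag ax1 ax2 ax3 hT hX,
      fun T hT => conj_bijOn hdiag ax1 ax2 ax3 hT,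
      fun T hT U hU => ⟨U * T, TTpp_mul_mem hdiag ax1 hU hT, fun X _ => conj_comp U T X⟩,
      fun T hT => ⟨T⁻¹, TTpp_inv_mem hdiag ax1 hT, fun X _ => ⟨?_, ?_⟩⟩,
      fun X hX Y hY => simply_transitive hn hdiag ax1 ax2 ax3 hX hY⟩
    · rw [conj_comp, TTpp_mul_inv hT]
      simp
    · rw [conj_comp, TTpp_inv_mul hT]
      simp
  · rintro ⟨hmap, -, -, -, -⟩
    exact ⟨derive_ax1 hdiag hmap, derive_ax2 hdiag hmap, derive_ax3 hdiag hmap⟩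
end
end
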